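/- arXiv:1501.05104 — 8 statements merged into one kernel-verified Lean document; each statement's English description precedes it below -/
import Mathlib

section
/- If a stack operation f (a flow τ(x) ⊣ σ(x) built from unary function symbols applied to a single variable) is a cycle, then fⁿ ≠ 0 for all n ≥ 1. -/
/-!  Base definitions for the Stack semiring: unary flows ("stack operations")
`τ(x) ⊣ σ(x)` are modelled as pairs of lists of unary function symbols
(outermost symbol first).  The resolution product of two stack operations is
defined when one of the two sequences to be unified is a prefix of the other. -/

/-- A stack operation `τ(x) ⊣ σ(x)`: the first component is the head/left term
`τ(x)`, the second the body/right term `σ(x)`, each a sequence of unary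
function symbols applied to the variable `x` (outermost first). -/
abbrev SOp := List ℕ × List ℕ

/-- Resolution product of stack operations (`none` = undefined = 0).
`(τ ⊣ σ)(ρ ⊣ χ)` unifies `σ(x)` with `ρ(y)`. -/
def scomp (f g : SOp) : Option SOp :=
  if f.2 <+: g.1 then some (f.1 ++ g.1.drop f.2.length, g.2)
  else if g.1 <+: f.2 then some (f.1, g.2 ++ f.2.drop g.1.length)
  else none

/-- Height of a stack operation: max of the heights of its two terms. -/
def hOp (f : SOp) : ℕ := max f.1.length f.2.length

/-- A stack operation is a cycle iff its two terms are matchable, which for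
unary terms `τ(x)`, `σ(y)` means one sequence is a prefix of the other. -/
def isCycleS (f : SOp) : Prop := f.1 <+: f.2 ∨ f.2 <+: f.1

/-- `f` is increasing when `h(τ(x)) ≥ h(σ(x))`. -/
def incP (f : SOp) : Prop := f.2.length ≤ f.1.length

/-- `f` is decreasing when `h(τ(x)) ≤ h(σ(x))`. -/
def decP (f : SOp) : Prop := f.1.length ≤ f.2.length

instance : DecidablePred incP := fun f => inferInstanceAs (Decidable (_ ≤ _))
instance : DecidablePred decP := fun f => inferInstanceAs (Decidable (_ ≤ _))

/-- A wiring of the Stack semiring: a finite set (sum) of stack operations. -/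
abbrev SWiring := Finset SOp

/-- Product of wirings: pointwise products of flows, keeping defined ones. -/
def smul (F G : SWiring) : SWiring :=
  (F ×ˢ G).biUnion fun p => (scomp p.1 p.2).toFinset

/-- Powers of a wiring (`spow F 0` is the unit wiring `{x ⊣ x}`). -/
def spow (F : SWiring) : ℕ → SWiring
  | 0 => {(([] : List ℕ), ([] : List ℕ))}
  | n + 1 => smul (spow F n) F

/-- Nilpotency: some (positive) power is 0, i.e. the empty wiring. -/
def SNilpotent (F : SWiring) : Prop := ∃ n, 0 < n ∧ spow F n = ∅

/-- Cyclicity: some power contains a cycle. -/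
def SCyclic (F : SWiring) : Prop := ∃ k, 0 < k ∧ ∃ f ∈ spow F k, isCycleS f

/-- Increasing part of a wiring. -/
def incF (F : SWiring) : SWiring := F.filter incP

/-- Decreasing part of a wiring. -/
def decF (F : SWiring) : SWiring := F.filter decP

/-- The shortcut operation `short(F) = F + F↓·F↑`. -/
def short (F : SWiring) : SWiring := F ∪ smul (decF F) (incF F)

/-- Height of a wiring (0 for the empty wiring). -/
def wheightS (F : SWiring) : ℕ := F.sup hOp

/-- The function symbols occurring in a wiring. -/
def symbolsS (F : SWiring) : Finset ℕ :=
  F.biUnion fun f => f.1.toFinset ∪ f.2.toFinset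

/-- Size of a wiring: total number of function symbol occurrences. -/
def sizeS (F : SWiring) : ℕ := ∑ f ∈ F, (f.1.length + f.2.length)

/-- The saturation `sat(F) = Σₙ shortⁿ(F)`, least fixpoint of `short`
containing `F`. -/
def satSet (F : SWiring) : Set SOp := ⋃ n, (short^[n] F : Finset SOp)

/-- Powers of a single stack operation (as a flow; `none` = 0).
`opow f 0` is the unit flow `x ⊣ x`. -/
def opow (f : SOp) : ℕ → Option SOp
  | 0 => some (([] : List ℕ), ([] : List ℕ))
  | n + 1 => (opow f n).bind fun g => scomp g f

/-- if a stack operation is a cycle then all its powers `fⁿ`,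
`n ≥ 1`, are nonzero. -/
theorem cycle_iterates (f : SOp) (hf : isCycleS f) :
    ∀ n, 1 ≤ n → opow f n ≠ none := by
  have key : ∀ n, ∃ g, opow f n = some g ∧
      (g.2 <+: f.1 ∨ (f.1 <+: g.2 ∧ f.1 <+: f.2)) := by
    intro n
    induction n with
    | zero => exact ⟨_, rfl, Or.inl (List.nil_prefix)⟩
    | succ m ih =>
      obtain ⟨g, hg, hI⟩ := ih
      by_cases h : g.2 <+: f.1
      · refine ⟨(g.1 ++ f.1.drop g.2.length, f.2), ?_, ?_⟩
        · simp [opow, hg, scomp, h]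
        · rcases hf with h' | h'
          · exact Or.inr ⟨h', h'⟩
          · exact Or.inl h'
      · rcases hI with h' | ⟨h1, h2⟩
        · exact absurd h' h
        · refine ⟨(g.1, f.2 ++ g.2.drop f.1.length), ?_, ?_⟩
          · simp [opow, hg, scomp, h, h1]
          · exact Or.inr ⟨h2.trans (List.prefix_append _ _), h2⟩
  intro n _
  obtain ⟨g, hg, _⟩ := key n
  simp [hg]
end

section
/- If s = f₁,…,fₙ is an acyclic sequence of stack operations, then the height of the product f₁⋯fₙ is at most h(s)·(card(s)+1), where h(s) is the maximal height of the fᵢ and card(s) is the number of distinct flows among the fᵢ. -/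
/-- Product of a sequence of stack operations (left-to-right, `none` = 0). -/
def seqProd (s : List SOp) : Option SOp :=
  s.foldl (fun acc g => acc.bind fun a => scomp a g)
    (some (([] : List ℕ), ([] : List ℕ)))

/-- Height of a sequence: maximal height of its elements. -/
def seqHeight (s : List SOp) : ℕ := s.foldr (fun f m => max (hOp f) m) 0

/-- Cardinality of a sequence: number of distinct flows occurring in it. -/
def seqCard (s : List SOp) : ℕ := s.toFinset.card

/-- A sequence is cyclic if some contiguous nonempty subsequence has a product
which is a cycle. -/
def seqCyclic (s : List SOp) : Prop :=
  ∃ i len, 0 < len ∧ i + len ≤ s.length ∧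
    ∃ p, seqProd ((s.drop i).take len) = some p ∧ isCycleS p
namespace AcyclicAux

open List

def d0 : SOp := ([], [])

/-- Action of a stack operation on a word. -/
def act (f : SOp) (w : List ℕ) : Option (List ℕ) :=
  if f.2 <+: w then some (f.1 ++ w.drop f.2.length) else none

lemma act_eq_some {f : SOp} {w v : List ℕ} :
    act f w = some v ↔ f.2 <+: w ∧ v = f.1 ++ w.drop f.2.length := by
  unfold act; split <;> simp_all [eq_comm]

lemma act_self (f : SOp) : act f f.2 = some f.1 := by
  simp [act]

def oact (x : Option SOp) (w : List ℕ) : Option (List ℕ) := x.bind fun p => act p w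

def applySeq : List SOp → List ℕ → Option (List ℕ)
  | [], w => some w
  | f :: u, w => (applySeq u w).bind (act f)

lemma applySeq_append (u v : List SOp) (w : List ℕ) :
    applySeq (u ++ v) w = (applySeq v w).bind (applySeq u) := by
  induction u with
  | nil => simp [applySeq]
  | cons f u ih =>
      show (applySeq (u ++ v) w).bind (act f) = _
      rw [ih, Option.bind_assoc]
      rfl

lemma oact_scomp (f g : SOp) (w : List ℕ) :
    oact (scomp f g) w = (act g w).bind (act f) := by
  unfold scomp
  by_cases h1 : f.2 <+: g.1
  · simp only [h1, if_pos]
    by_cases h2 : g.2 <+: w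
    · have hfp : f.2 <+: g.1 ++ w.drop g.2.length := h1.trans (prefix_append _ _)
      simp only [oact, Option.bind_some, act, h2, if_pos, Option.bind_some, hfp, if_pos]
      rw [drop_append_of_le_length h1.length_le, append_assoc]
    · simp [oact, act, h2]
  · rw [if_neg h1]
    by_cases h3 : g.1 <+: f.2
    · rw [if_pos h3]
      obtain ⟨t, ht⟩ := h3
      have hlt : f.2.drop g.1.length = t := by rw [← ht, drop_left]
      by_cases h2 : g.2 <+: w
      · obtain ⟨w', hw⟩ := h2
        subst hw
        have hcond1 : (g.2 ++ f.2.drop g.1.length) <+: g.2 ++ w' ↔ t <+: w' := by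
          rw [hlt, prefix_append_right_inj]
        have hdw : (g.2 ++ w').drop g.2.length = w' := drop_left
        have hcond2 : f.2 <+: g.1 ++ w' ↔ t <+: w' := by
          rw [← ht, prefix_append_right_inj]
        simp only [oact, Option.bind_some, act, hdw]
        rw [if_pos (prefix_append g.2 w')]
        simp only [Option.bind_some, act]
        by_cases h4 : t <+: w'
        · rw [if_pos (hcond1.mpr h4), if_pos (hcond2.mpr h4)]
          congr 1
          rw [hlt]
          have len2 : (g.2 ++ t).length = g.2.length + t.length := length_append
          have lenf : f.2.length = g.1.length + t.length := by rw [← ht, length_append]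
          rw [len2, lenf]
          have e1 : (g.2 ++ w').drop (g.2.length + t.length) = w'.drop t.length := by
            rw [← drop_drop, hdw]
          have e2 : (g.1 ++ w').drop (g.1.length + t.length) = w'.drop t.length := by
            rw [← drop_drop, drop_left]
          rw [e1, e2]
        · rw [if_neg (fun hc => h4 (hcond1.mp hc)), if_neg (fun hc => h4 (hcond2.mp hc))]
      · have : ¬ (g.2 ++ f.2.drop g.1.length) <+: w := fun hc =>
          h2 ((prefix_append _ _).trans hc)
        simp [oact, act, h2, this]
    · rw [if_neg h3]
      by_cases h2 : g.2 <+: w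
      · have : ¬ f.2 <+: g.1 ++ w.drop g.2.length := by
          intro hc
          rcases le_total f.2.length g.1.length with hl | hl
          · exact h1 (prefix_of_prefix_length_le hc (prefix_append _ _) hl)
          · exact h3 (prefix_of_prefix_length_le (prefix_append _ _) hc hl)
        simp [oact, act, h2, this]
      · simp [oact, act, h2]

lemma oact_inj {x y : Option SOp} (h : ∀ w, oact x w = oact y w) : x = y := by
  match x, y with
  | none, none => rfl
  | some f, none => simpa [oact, act_self] using h f.2
  | none, some f => simpa [oact, act_self] using (h f.2).symm
  | some f, some f' =>
      have h1 : act f' f.2 = some f.1 := by simpa [oact, act_self] using (h f.2).symm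
      have h2 : act f f'.2 = some f'.1 := by simpa [oact, act_self] using h f'.2
      rw [act_eq_some] at h1 h2
      have hlen : f.2 = f'.2 :=
        h2.1.eq_of_length (le_antisymm h2.1.length_le h1.1.length_le)
      have : f.1 = f'.1 := by
        rw [h1.2, hlen, drop_length, append_nil]
      obtain ⟨a,b⟩ := f; obtain ⟨c,d⟩ := f'
      simp_all

def stepP (acc : Option SOp) (g : SOp) : Option SOp := acc.bind fun a => scomp a g

lemma seqProd_eq_foldl (s : List SOp) : seqProd s = s.foldl stepP (some d0) := rfl

lemma oact_foldl (t : List SOp) (x : Option SOp) (w : List ℕ) :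
    oact (t.foldl stepP x) w = (applySeq t w).bind (oact x) := by
  induction t generalizing x with
  | nil => simp [applySeq, oact]
  | cons f u ih =>
      show oact (u.foldl stepP (stepP x f)) w = _
      rw [ih]
      show _ = ((applySeq u w).bind (act f)).bind (oact x)
      rw [Option.bind_assoc]
      congr 1
      funext w'
      cases x with
      | none => cases act f w' <;> simp [stepP, oact]
      | some a => exact oact_scomp a f w'

lemma oact_seqProd (t : List SOp) (w : List ℕ) : oact (seqProd t) w = applySeq t w := by
  rw [seqProd_eq_foldl, oact_foldl]
  have : oact (some d0) w = some w := by simp [oact, act, d0]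
  calc (applySeq t w).bind (oact (some d0)) = (applySeq t w).bind some := by
        congr 1
    _ = applySeq t w := by cases applySeq t w <;> rfl

lemma prodCons (f : SOp) (t : List SOp) :
    seqProd (f :: t) = (seqProd t).bind fun r => scomp f r := by
  apply oact_inj
  intro w
  rw [oact_seqProd]
  show applySeq (f :: t) w = _
  show (applySeq t w).bind (act f) = _
  cases hT : seqProd t with
  | none =>
      have : applySeq t w = none := by rw [← oact_seqProd, hT]; rfl
      simp [this, oact]
  | some r =>
      have hr : applySeq t w = act r w := by rw [← oact_seqProd, hT]; rfl
      rw [hr, ← oact_scomp f r w]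
      rfl

lemma prodAppendSingleton (t : List SOp) (f : SOp) :
    seqProd (t ++ [f]) = (seqProd t).bind fun a => scomp a f := by
  rw [seqProd_eq_foldl, foldl_append]
  rfl

/-- All partial applications along a successful run are defined. -/
lemma applySeq_some_of_prefix {u v : List SOp} {w : List ℕ} {r : List ℕ}
    (h : applySeq (u ++ v) w = some r) : ∃ x, applySeq v w = some x := by
  rw [applySeq_append] at h
  cases hv : applySeq v w with
  | none => rw [hv] at h; exact absurd h (by simp)
  | some x => exact ⟨x, rfl⟩

lemma cycle_of_repeat (s : List SOp) (p : SOp) (hs : seqProd s = some p)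
    (w : ℕ → List ℕ) (hw : ∀ i ≤ s.length, applySeq (s.drop i) p.2 = some (w i))
    (A B : ℕ) (hAB : A < B) (hB : B < s.length)
    (heq : s.getD A d0 = s.getD B d0)
    (hmin : ∀ j, A < j → j ≤ B →
      (w (A+1)).length + (s.getD j d0).2.length ≤
        (w (j+1)).length + (s.getD A d0).2.length) :
    seqCyclic s := by
  set n := s.length with hn
  have stepF : ∀ i, i < n → (s.getD i d0).2 <+: w (i+1) ∧
      w i = (s.getD i d0).1 ++ (w (i+1)).drop (s.getD i d0).2.length := by
    intro i hi
    have h1 := hw i hi.le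
    rw [List.drop_eq_getElem_cons hi] at h1
    have h2 : (applySeq (s.drop (i+1)) p.2).bind (act (s[i]'hi)) = some (w i) := h1
    rw [hw (i+1) hi, Option.bind_some] at h2
    rw [List.getD_eq_getElem s d0 hi]
    exact act_eq_some.mp h2
  have leneq : ∀ i, i < n → (w i).length + (s.getD i d0).2.length =
      (s.getD i d0).1.length + (w (i+1)).length := by
    intro i hi
    have h1 := (stepF i hi).1.length_le
    rw [(stepF i hi).2, length_append, length_drop]
    omega
  set seg : ℕ → List SOp := fun j => (s.drop j).take (B - j) with hseg
  have hsegrun : ∀ j, A ≤ j → j ≤ B → applySeq (seg j) (w B) = some (w j) := by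
    intro j h1 h2
    have hdec : s.drop j = seg j ++ s.drop B := by
      have h3 := take_append_drop (B - j) (s.drop j)
      rw [drop_drop] at h3
      rw [show j + (B - j) = B by omega] at h3
      exact h3.symm
    have h4 := hw j (le_trans h2 hB.le)
    rw [hdec, applySeq_append, hw B hB.le, Option.bind_some] at h4
    exact h4
  set ρ : ℕ → SOp := fun j => (seqProd (seg j)).getD d0 with hρdef
  have hρ : ∀ j, A ≤ j → j ≤ B → seqProd (seg j) = some (ρ j) ∧
      (ρ j).2 <+: w B ∧ w j = (ρ j).1 ++ (w B).drop (ρ j).2.length := by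
    intro j h1 h2
    have h3 : oact (seqProd (seg j)) (w B) = some (w j) := by
      rw [oact_seqProd]; exact hsegrun j h1 h2
    cases hT : seqProd (seg j) with
    | none => rw [hT] at h3; exact absurd h3 (by simp [oact])
    | some r =>
        have hr : ρ j = r := by simp [hρdef, hT]
        rw [hT] at h3
        have h4 : act r (w B) = some (w j) := h3
        rw [act_eq_some] at h4
        exact ⟨by rw [hr], by rw [hr]; exact h4.1, by rw [hr]; exact h4.2⟩
  have hrec : ∀ j, A ≤ j → j < B → scomp (s.getD j d0) (ρ (j+1)) = some (ρ j) := by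
    intro j h1 h2
    have hj : j < n := lt_trans h2 hB
    have hcons : seg j = s.getD j d0 :: seg (j+1) := by
      simp only [hseg]
      rw [List.drop_eq_getElem_cons hj, show B - j = (B - (j+1)) + 1 by omega,
        take_succ_cons, List.getD_eq_getElem s d0 hj]
    have h3 := (hρ j h1 h2.le).1
    rw [hcons, prodCons, (hρ (j+1) (by omega) (by omega)).1, Option.bind_some] at h3
    exact h3
  have hA : A < n := lt_trans hAB hB
  have eqA := leneq A hA
  have eqB := leneq B hB
  have hbase : (w A).length ≤ (w B).length := by
    have h5 := hmin B hAB le_rfl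
    rw [← heq] at eqB h5
    omega
  have hρB : ρ B = d0 := by
    have h3 := (hρ B hAB.le le_rfl).1
    have : seg B = [] := by simp [hseg]
    rw [this] at h3
    have h4 : seqProd ([] : List SOp) = some d0 := rfl
    rw [h4] at h3
    exact (Option.some_inj.mp h3).symm
  have inv : ∀ m, ∀ j, A ≤ j → j ≤ B → B - j ≤ m →
      (ρ j).1.length + (w A).length ≤ (w j).length + (s.getD A d0).1.length := by
    intro m
    induction m with
    | zero =>
        intro j h1 h2 h3
        have hjB : j = B := by omega
        subst hjB
        rw [hρB]
        simp only [d0, List.length_nil, zero_add]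
        omega
    | succ m ih =>
        intro j h1 h2 h3
        by_cases hjB : j = B
        · subst hjB
          rw [hρB]
          simp only [d0, List.length_nil, zero_add]
          omega
        · have hjB' : j < B := lt_of_le_of_ne h2 hjB
          have hj : j < n := lt_trans hjB' hB
          have hrecj := hrec j h1 hjB'
          have ihj := ih (j+1) (by omega) (by omega) (by omega)
          have hρj1 := hρ (j+1) (by omega) (by omega)
          have hlen1 : (ρ (j+1)).1.length ≤ (w (j+1)).length := by
            rw [hρj1.2.2, length_append]; omega
          have eqj := leneq j hj
          have hpre := (stepF j hj).1.length_le
          simp only [scomp] at hrecj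
          split_ifs at hrecj with c1 c2
          · have hc1 := c1.length_le
            have hρjval : ρ j = ((s.getD j d0).1 ++ (ρ (j+1)).1.drop (s.getD j d0).2.length,
                (ρ (j+1)).2) := (Option.some_inj.mp hrecj).symm
            have hl : (ρ j).1.length =
                ((s.getD j d0).1 ++ (ρ (j+1)).1.drop (s.getD j d0).2.length).length := by
              rw [hρjval]
            rw [length_append, length_drop] at hl
            omega
          · have hρjval : ρ j = ((s.getD j d0).1,
                (ρ (j+1)).2 ++ (s.getD j d0).2.drop (ρ (j+1)).1.length) :=
              (Option.some_inj.mp hrecj).symm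
            have hl : (ρ j).1.length = (s.getD j d0).1.length := by rw [hρjval]
            by_cases hjA : j = A
            · subst hjA; omega
            · have h6 := hmin j (lt_of_le_of_ne h1 (Ne.symm hjA)) h2
              have h7 := (stepF A hA).1.length_le
              omega
  have hinvA := inv (B - A) A le_rfl hAB.le le_rfl
  have hr := hρ A le_rfl hAB.le
  have r1wA : (ρ A).1 <+: w A := ⟨_, hr.2.2.symm⟩
  have gwA : (s.getD A d0).1 <+: w A := ⟨_, (stepF A hA).2.symm⟩
  have gwB : (s.getD A d0).1 <+: w B := by
    have h8 := (stepF B hB).2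
    rw [← heq] at h8
    exact ⟨_, h8.symm⟩
  have hlen : (ρ A).1.length ≤ (s.getD A d0).1.length := by omega
  have rg : (ρ A).1 <+: (s.getD A d0).1 := prefix_of_prefix_length_le r1wA gwA hlen
  have r1wB : (ρ A).1 <+: w B := rg.trans gwB
  have r2wB : (ρ A).2 <+: w B := hr.2.1
  have hcyc : isCycleS (ρ A) := by
    rcases le_total (ρ A).1.length (ρ A).2.length with h | h
    · exact Or.inl (prefix_of_prefix_length_le r1wB r2wB h)
    · exact Or.inr (prefix_of_prefix_length_le r2wB r1wB h)
  exact ⟨A, B - A, by omega, by omega, ρ A, hr.1, hcyc⟩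

lemma stepFacts (s : List SOp) (p : SOp) (w : ℕ → List ℕ)
    (hw : ∀ i ≤ s.length, applySeq (s.drop i) p.2 = some (w i))
    (i : ℕ) (hi : i < s.length) :
    (s.getD i d0).2 <+: w (i+1) ∧
      w i = (s.getD i d0).1 ++ (w (i+1)).drop (s.getD i d0).2.length := by
  have h1 := hw i hi.le
  rw [List.drop_eq_getElem_cons hi] at h1
  have h2 : (applySeq (s.drop (i+1)) p.2).bind (act (s[i]'hi)) = some (w i) := h1
  rw [hw (i+1) hi, Option.bind_some] at h2
  rw [List.getD_eq_getElem s d0 hi]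
  exact act_eq_some.mp h2

lemma w_last (s : List SOp) (p : SOp) (w : ℕ → List ℕ)
    (hw : ∀ i ≤ s.length, applySeq (s.drop i) p.2 = some (w i)) :
    w s.length = p.2 := by
  have h1 := hw s.length le_rfl
  rw [drop_length] at h1
  exact (Option.some_inj.mp h1).symm

lemma drop_dropLast (l : List ℕ) (k : ℕ) :
    l.dropLast.drop k = (l.drop k).dropLast := by
  rw [dropLast_eq_take, dropLast_eq_take, drop_take, length_drop]
  congr 1
  omega

lemma exists_zero (s : List SOp) (p : SOp) (hs : seqProd s = some p)
    (w : ℕ → List ℕ) (hw : ∀ i ≤ s.length, applySeq (s.drop i) p.2 = some (w i))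
    (hp2 : p.2 ≠ []) :
    ∃ i, i < s.length ∧ (w (i+1)).length = (s.getD i d0).2.length := by
  by_contra hcon
  push_neg at hcon
  have epos : ∀ i, i < s.length → (s.getD i d0).2.length < (w (i+1)).length := by
    intro i hi
    exact lt_of_le_of_ne (stepFacts s p w hw i hi).1.length_le (Ne.symm (hcon i hi))
  have claim : ∀ m i, i ≤ s.length → s.length - i ≤ m →
      applySeq (s.drop i) p.2.dropLast = some ((w i).dropLast) := by
    intro m
    induction m with
    | zero =>
        intro i h1 h2
        have : i = s.length := by omega
        subst this
        rw [drop_length]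
        rw [w_last s p w hw]
        rfl
    | succ m ih =>
        intro i h1 h2
        by_cases hin : i = s.length
        · subst hin
          rw [drop_length, w_last s p w hw]
          rfl
        · have hi : i < s.length := lt_of_le_of_ne h1 hin
          rw [List.drop_eq_getElem_cons hi]
          show (applySeq (s.drop (i+1)) p.2.dropLast).bind (act (s[i]'hi)) = _
          rw [ih (i+1) hi (by omega), Option.bind_some]
          apply act_eq_some.mpr
          have hstep := stepFacts s p w hw i hi
          have hep := epos i hi
          rw [List.getD_eq_getElem s d0 hi] at hstep hep
          constructor
          · refine prefix_of_prefix_length_le hstep.1 (dropLast_prefix _) ?_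
            rw [length_dropLast]
            omega
          · rw [hstep.2, drop_dropLast, dropLast_append_of_ne_nil]
            intro hnil
            have := congrArg List.length hnil
            rw [length_drop] at this
            simp at this
            omega
  have h0 := claim s.length 0 (by omega) (by omega)
  rw [drop_zero] at h0
  rw [← oact_seqProd, hs] at h0
  have h4 := (act_eq_some.mp h0).1.length_le
  rw [length_dropLast] at h4
  have : 0 < p.2.length := length_pos_iff.mpr hp2
  omega

lemma hOp_le_seqHeight {f : SOp} {l : List SOp} (h : f ∈ l) : hOp f ≤ seqHeight l := by
  induction l with
  | nil => cases h
  | cons g t ih =>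
      have hsh : seqHeight (g :: t) = max (hOp g) (seqHeight t) := rfl
      rcases mem_cons.mp h with rfl | h'
      · rw [hsh]; exact le_max_left _ _
      · rw [hsh]; exact le_trans (ih h') (le_max_right _ _)

lemma half (s : List SOp) (p : SOp) (hne : s ≠ []) (hacyc : ¬ seqCyclic s)
    (hs : seqProd s = some p) : p.2.length ≤ seqHeight s * (seqCard s + 1) := by
  have hnpos : 0 < s.length := length_pos_iff.mpr hne
  have hrun : applySeq s p.2 = some p.1 := by
    rw [← oact_seqProd, hs]; exact act_self p
  set w : ℕ → List ℕ := fun i => (applySeq (s.drop i) p.2).getD [] with hwdef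
  have hw : ∀ i ≤ s.length, applySeq (s.drop i) p.2 = some (w i) := by
    intro i _
    obtain ⟨x, hx⟩ := applySeq_some_of_prefix (u := s.take i) (v := s.drop i)
      (w := p.2) (r := p.1) (by rw [take_append_drop]; exact hrun)
    rw [hx]; simp [hwdef, hx]
  by_cases hp2 : p.2 = []
  · simp [hp2]
  set e : ℕ → ℕ := fun i => (w (i+1)).length - (s.getD i d0).2.length with hedef
  have hH : ∀ i, i < s.length →
      (s.getD i d0).1.length ≤ seqHeight s ∧ (s.getD i d0).2.length ≤ seqHeight s := by
    intro i hi
    rw [List.getD_eq_getElem s d0 hi]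
    have hm := hOp_le_seqHeight (getElem_mem hi)
    unfold hOp at hm
    omega
  have hstepc : ∀ i, i + 1 < s.length → e (i+1) ≤ e i + seqHeight s := by
    intro i hi2
    have hi : i < s.length := by omega
    have s1 := (stepFacts s p w hw i hi).1.length_le
    have s2 := (stepFacts s p w hw (i+1) hi2).1.length_le
    have leq : (w (i+1)).length + (s.getD (i+1) d0).2.length =
        (s.getD (i+1) d0).1.length + (w (i+1+1)).length := by
      have h1 := (stepFacts s p w hw (i+1) hi2).2
      rw [h1, length_append, length_drop]
      omega
    have b1 := (hH i hi).2
    have b2 := (hH (i+1) hi2).1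
    simp only [hedef]
    omega
  have climb : ∀ m, ∀ i, i < s.length → s.length - i ≤ m + 1 →
      (∀ j, i < j → j < s.length → e i ≤ e j) →
      e (s.length - 1) ≤ e i + seqHeight s * ((s.drop (i+1)).toFinset.card) := by
    intro m
    induction m with
    | zero =>
        intro i hi hni _
        have hieq : i = s.length - 1 := by omega
        rw [hieq]
        exact Nat.le_add_right _ _
    | succ m ih =>
        intro i hi hni hmini
        by_cases hlast : i = s.length - 1
        · rw [hlast]
          exact Nat.le_add_right _ _
        · have hi2 : i + 1 < s.length := by omega
          have hSne : (Finset.Ioo i s.length).Nonempty :=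
            ⟨i+1, Finset.mem_Ioo.mpr ⟨by omega, hi2⟩⟩
          obtain ⟨j0, hj0S, hj0min⟩ := Finset.exists_min_image (Finset.Ioo i s.length) e hSne
          have hMne : ((Finset.Ioo i s.length).filter (fun j => e j = e j0)).Nonempty :=
            ⟨j0, Finset.mem_filter.mpr ⟨hj0S, rfl⟩⟩
          set i' := ((Finset.Ioo i s.length).filter (fun j => e j = e j0)).max' hMne
            with hi'def
          have hi'mem : i' ∈ (Finset.Ioo i s.length).filter (fun j => e j = e j0) :=
            Finset.max'_mem _ hMne
          obtain ⟨hS, hei'⟩ := Finset.mem_filter.mp hi'mem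
          obtain ⟨hii', hi'n⟩ := Finset.mem_Ioo.mp hS
          have hi'min : ∀ j, i' < j → j < s.length → e i' ≤ e j := by
            intro j h1 h2
            rw [hei']
            exact hj0min j (Finset.mem_Ioo.mpr ⟨by omega, h2⟩)
          have hnor : ∀ j, i' < j → j < s.length → s.getD j d0 ≠ s.getD i' d0 := by
            intro j h1 h2 hcontra
            apply hacyc
            apply cycle_of_repeat s p hs w hw i' j h1 h2 hcontra.symm
            intro k hk1 hk2
            have h5 := hi'min k hk1 (lt_of_le_of_lt hk2 h2)
            have p1 := (stepFacts s p w hw i' hi'n).1.length_le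
            have p2 := (stepFacts s p w hw k (lt_of_le_of_lt hk2 h2)).1.length_le
            simp only [hedef] at h5
            omega
          have hx : s.getD i' d0 ∈ (s.drop (i+1)).toFinset := by
            rw [mem_toFinset]
            have hlen : i' - (i+1) < (s.drop (i+1)).length := by
              rw [length_drop]; omega
            have : (s.drop (i+1))[i' - (i+1)]'hlen = s[i']'hi'n := by
              rw [getElem_drop]
              congr 1
              omega
            rw [List.getD_eq_getElem s d0 hi'n, ← this]
            exact getElem_mem hlen
          have hnx : s.getD i' d0 ∉ (s.drop (i'+1)).toFinset := by
            intro hmem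
            rw [mem_toFinset] at hmem
            obtain ⟨k, hk, hkeq⟩ := List.mem_iff_getElem.mp hmem
            rw [length_drop] at hk
            have hkn : i' + 1 + k < s.length := by omega
            apply hnor (i'+1+k) (by omega) hkn
            rw [List.getD_eq_getElem s d0 hkn, ← hkeq, getElem_drop]
          have hsub : (s.drop (i'+1)).toFinset ⊆ (s.drop (i+1)).toFinset := by
            intro x hxm
            rw [mem_toFinset] at hxm ⊢
            have hdd : s.drop (i'+1) = (s.drop (i+1)).drop (i' - i) := by
              rw [drop_drop]
              congr 1
              omega
            rw [hdd] at hxm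
            exact (drop_sublist _ _).subset hxm
          have hcard : (s.drop (i'+1)).toFinset.card + 1 ≤ (s.drop (i+1)).toFinset.card := by
            have := Finset.card_lt_card ((Finset.ssubset_iff_of_subset hsub).mpr
              ⟨s.getD i' d0, hx, hnx⟩)
            omega
          have hIH := ih i' hi'n (by omega) hi'min
          have h6 : e i' ≤ e (i+1) := by
            rw [hei']
            exact hj0min (i+1) (Finset.mem_Ioo.mpr ⟨by omega, hi2⟩)
          have h7 := hstepc i hi2
          have h8 : seqHeight s * ((s.drop (i'+1)).toFinset.card + 1) ≤
              seqHeight s * ((s.drop (i+1)).toFinset.card) := Nat.mul_le_mul_left _ hcard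
          rw [Nat.mul_add, Nat.mul_one] at h8
          omega
  obtain ⟨i0, hi0n, hez⟩ := exists_zero s p hs w hw hp2
  have he0 : e i0 = 0 := by simp [hedef, hez]
  have hclimb := climb s.length i0 hi0n (by omega)
    (by intro j _ _; rw [he0]; exact Nat.zero_le _)
  have hcardC : (s.drop (i0+1)).toFinset.card ≤ seqCard s := by
    apply Finset.card_le_card
    intro x hxm
    rw [mem_toFinset] at hxm ⊢
    exact (drop_sublist _ _).subset hxm
  have hmul : seqHeight s * ((s.drop (i0+1)).toFinset.card) ≤ seqHeight s * seqCard s :=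
    Nat.mul_le_mul_left _ hcardC
  have hlastlen : p.2.length = e (s.length - 1) + (s.getD (s.length - 1) d0).2.length := by
    have hn1 : s.length - 1 < s.length := by omega
    have s1 := (stepFacts s p w hw (s.length - 1) hn1).1.length_le
    have hwl : w s.length = p.2 := w_last s p w hw
    simp only [hedef]
    rw [show s.length - 1 + 1 = s.length by omega] at s1 ⊢
    rw [hwl] at s1 ⊢
    omega
  have hb := (hH (s.length - 1) (by omega)).2
  have hexp : seqHeight s * (seqCard s + 1) = seqHeight s * seqCard s + seqHeight s := by ring
  omega

def sswap (l : List SOp) : List SOp := (l.map Prod.swap).reverse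

lemma scomp_swap (a b : SOp) : scomp b.swap a.swap = (scomp a b).map Prod.swap := by
  simp only [scomp, Prod.fst_swap, Prod.snd_swap]
  by_cases h1 : a.2 <+: b.1 <;> by_cases h2 : b.1 <+: a.2 <;>
    simp only [h1, h2, if_true, if_false, Option.map_some, Option.map_none,
      Prod.swap_prod_mk]
  · have heq : a.2 = b.1 := h1.eq_of_length (le_antisymm h1.length_le h2.length_le)
    rw [heq, ← heq]
    simp

lemma length_sswap (l : List SOp) : (sswap l).length = l.length := by
  simp [sswap]

lemma sswap_append_singleton (t : List SOp) (f : SOp) :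
    sswap (t ++ [f]) = f.swap :: sswap t := by
  simp [sswap]

lemma seqProd_sswap (l : List SOp) : seqProd (sswap l) = (seqProd l).map Prod.swap := by
  induction l using List.reverseRecOn with
  | nil => rfl
  | append_singleton t f ih =>
      rw [sswap_append_singleton, prodCons, prodAppendSingleton, ih]
      cases hT : seqProd t with
      | none => rfl
      | some q =>
          simp only [Option.map_some, Option.bind_some]
          exact scomp_swap q f

lemma seqHeight_cons (f : SOp) (l : List SOp) :
    seqHeight (f :: l) = max (hOp f) (seqHeight l) := rfl

lemma seqHeight_append_singleton (l : List SOp) (f : SOp) :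
    seqHeight (l ++ [f]) = max (hOp f) (seqHeight l) := by
  induction l with
  | nil => rfl
  | cons g t ih =>
      rw [cons_append, seqHeight_cons, ih, seqHeight_cons, max_left_comm]

lemma hOp_swap (f : SOp) : hOp f.swap = hOp f := by
  simp [hOp, Nat.max_comm]

lemma seqHeight_sswap (l : List SOp) : seqHeight (sswap l) = seqHeight l := by
  induction l using List.reverseRecOn with
  | nil => rfl
  | append_singleton t f ih =>
      rw [sswap_append_singleton, seqHeight_cons, ih, hOp_swap,
        seqHeight_append_singleton]

lemma toFinset_map_swap (l : List SOp) :
    (l.map Prod.swap).toFinset = l.toFinset.image Prod.swap := by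
  induction l with
  | nil => simp
  | cons f t ih => simp [ih]

lemma seqCard_sswap (l : List SOp) : seqCard (sswap l) = seqCard l := by
  unfold seqCard sswap
  rw [List.toFinset_reverse, toFinset_map_swap]
  exact Finset.card_image_of_injective _ Prod.swap_injective

lemma isCycleS_swap {f : SOp} : isCycleS f.swap ↔ isCycleS f := by
  simp only [isCycleS, Prod.fst_swap, Prod.snd_swap]
  exact or_comm

lemma sswap_segment (l : List SOp) (i len : ℕ) (h : i + len ≤ l.length) :
    ((sswap l).drop i).take len = sswap ((l.drop (l.length - i - len)).take len) := by
  unfold sswap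
  rw [map_take, map_drop, drop_reverse, take_reverse, length_take, length_map, drop_take]
  congr 1
  rw [show (l.length - i) ⊓ l.length - len = l.length - i - len by omega,
    show l.length - i - (l.length - i - len) = len by omega]

lemma seqCyclic_sswap {l : List SOp} (h : seqCyclic (sswap l)) : seqCyclic l := by
  obtain ⟨i, len, hpos, hle, c, hprod, hcyc⟩ := h
  rw [length_sswap] at hle
  rw [sswap_segment l i len hle, seqProd_sswap] at hprod
  cases hT : seqProd ((l.drop (l.length - i - len)).take len) with
  | none => rw [hT] at hprod; exact absurd hprod (by simp)
  | some q =>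
      rw [hT] at hprod
      simp only [Option.map_some] at hprod
      have hqc : q.swap = c := Option.some_inj.mp hprod
      refine ⟨l.length - i - len, len, hpos, by omega, q, hT, ?_⟩
      rw [← hqc] at hcyc
      exact isCycleS_swap.mp hcyc

end AcyclicAux


/-- acyclic sequence lemma: if `s = f₁,…,fₙ` is an acyclic
sequence of stack operations then `h(f₁⋯fₙ) ≤ h(s)·(card(s)+1)`. -/
theorem acyclic_seq_height (s : List SOp) (hne : s ≠ [])
    (hacyc : ¬ seqCyclic s) :
    ∀ p, seqProd s = some p → hOp p ≤ seqHeight s * (seqCard s + 1) := by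
  intro p hp
  have h2 := AcyclicAux.half s p hne hacyc hp
  have hswne : AcyclicAux.sswap s ≠ [] := by
    intro hc
    have h3 := congrArg List.length hc
    rw [AcyclicAux.length_sswap] at h3
    exact hne (List.length_eq_zero_iff.mp h3)
  have hswacyc : ¬ seqCyclic (AcyclicAux.sswap s) := fun hc =>
    hacyc (AcyclicAux.seqCyclic_sswap hc)
  have hswprod : seqProd (AcyclicAux.sswap s) = some p.swap := by
    rw [AcyclicAux.seqProd_sswap, hp]; rfl
  have h1 := AcyclicAux.half _ p.swap hswne hswacyc hswprod
  rw [AcyclicAux.seqHeight_sswap, AcyclicAux.seqCard_sswap] at h1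
  have h1' : p.1.length ≤ seqHeight s * (seqCard s + 1) := h1
  unfold hOp
  omega
end

section
/- A wiring F in the Stack semiring (a finite sum of stack operations) is nilpotent if and only if it is acyclic, i.e., no power Fᵏ contains a cycle. -/
def app (f : SOp) (w : List ℕ) : Option (List ℕ) :=
  if f.2 <+: w then some (f.1 ++ w.drop f.2.length) else none

lemma app_self (p : SOp) : app p p.2 = some p.1 := by
  simp [app]

lemma app_isSome_iff {f : SOp} {w : List ℕ} : (app f w).isSome ↔ f.2 <+: w := by
  unfold app; split <;> simp_all

lemma app_eq_some {f : SOp} {w u : List ℕ} (h : app f w = some u) :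
    f.2 <+: w ∧ u = f.1 ++ w.drop f.2.length := by
  unfold app at h; split at h <;> simp_all

lemma prefix_append_iff {a b w : List ℕ} :
    a ++ b <+: w ↔ a <+: w ∧ b <+: w.drop a.length := by
  constructor
  · rintro ⟨t, ht⟩
    subst ht
    refine ⟨(List.prefix_append a b).trans (by simp), ?_⟩
    rw [List.append_assoc, List.drop_left]
    exact List.prefix_append b t
  · rintro ⟨⟨t, ht⟩, hb⟩
    subst ht
    rw [List.drop_left] at hb
    obtain ⟨s, hs⟩ := hb
    exact ⟨s, by rw [List.append_assoc, hs]⟩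

/-- The product flow acts as the composition of the actions. -/
lemma app_scomp {f g p : SOp} (h : scomp f g = some p) (w : List ℕ) :
    app p w = (app g w).bind (app f) := by
  unfold scomp at h
  split at h
  · rename_i hfg
    obtain ⟨r, hr⟩ := hfg
    cases h
    by_cases hw : g.2 <+: w
    · obtain ⟨t, ht⟩ := hw
      subst ht
      have h2 : f.2 <+: g.1 ++ t := ⟨r ++ t, by rw [← hr]; simp⟩
      simp only [app, if_pos (⟨t, rfl⟩ : g.2 <+: g.2 ++ t), Option.bind_some, if_pos h2,
        List.drop_left]
      rw [← hr]
      simp [app, List.drop_append]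
    · have hw' : ¬ ((f.1 ++ g.1.drop f.2.length, g.2) : SOp).2 <+: w := hw
      simp [app, if_neg hw, if_neg hw']
  · split at h
    · rename_i hnfg hgf
      obtain ⟨r, hr⟩ := hgf
      have hfr : f.2.drop g.1.length = r := by rw [← hr, List.drop_left]
      cases h
      by_cases hw : g.2 <+: w
      · obtain ⟨t, ht⟩ := hw
        subst ht
        have hgp : g.2 <+: g.2 ++ t := ⟨t, rfl⟩
        by_cases hrt : r <+: t
        · have c1 : g.2 ++ f.2.drop g.1.length <+: g.2 ++ t := by
            rw [hfr, List.prefix_append_right_inj]; exact hrt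
          have c2 : f.2 <+: g.1 ++ t := by rw [← hr, List.prefix_append_right_inj]; exact hrt
          simp only [app, if_pos hgp, if_pos c1, Option.bind_some, if_pos c2, List.drop_left]
          rw [hfr, ← hr]
          simp [List.drop_append, List.drop_eq_nil_of_le]
        · have c1 : ¬ (g.2 ++ f.2.drop g.1.length <+: g.2 ++ t) := by
            rw [hfr, List.prefix_append_right_inj]; exact hrt
          have c2 : ¬ (f.2 <+: g.1 ++ t) := by rw [← hr, List.prefix_append_right_inj]; exact hrt
          simp only [app, if_neg c1, if_pos hgp, Option.bind_some, List.drop_left, if_neg c2]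
      · have hw' : ¬ (g.2 ++ f.2.drop g.1.length <+: w) := by
          rw [hfr]; exact fun hh => hw ((List.prefix_append _ _).trans hh)
        simp [app, if_neg hw, if_neg hw']
    · exact absurd h (by simp)

/-- Completeness: if the actions compose somewhere, the product is defined. -/
lemma scomp_isSome {f g : SOp} {w u v : List ℕ}
    (hg : app g w = some u) (hf : app f u = some v) : ∃ p, scomp f g = some p := by
  obtain ⟨hg1, hg2⟩ := app_eq_some hg
  obtain ⟨hf1, _⟩ := app_eq_some hf
  subst hg2
  have hpre : f.2 <+: g.1 ∨ g.1 <+: f.2 := by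
    rcases le_total f.2.length g.1.length with hl | hl
    · exact Or.inl (List.prefix_of_prefix_length_le hf1 (List.prefix_append _ _) hl)
    · exact Or.inr (List.prefix_of_prefix_length_le (List.prefix_append _ _) hf1 hl)
  unfold scomp
  split
  · exact ⟨_, rfl⟩
  · split
    · exact ⟨_, rfl⟩
    · tauto

lemma sop_ext {p q : SOp} (h : ∀ w, app p w = app q w) : p = q := by
  have h1 := (h p.2).symm
  rw [app_self] at h1
  have h2 := h q.2
  rw [app_self] at h2
  obtain ⟨hq2, _⟩ := app_eq_some h1
  obtain ⟨hp2, _⟩ := app_eq_some h2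
  have h22 : p.2 = q.2 := hp2.eq_of_length (le_antisymm hp2.length_le hq2.length_le)
  obtain ⟨hq2', hval⟩ := app_eq_some h1
  rw [h22, List.drop_length, List.append_nil] at hval
  exact Prod.ext hval h22

lemma assocA {a b c x y : SOp} (hab : scomp a b = some x) (hxc : scomp x c = some y) :
    ∃ z, scomp b c = some z ∧ scomp a z = some y := by
  have hy := app_self y
  rw [app_scomp hxc] at hy
  obtain ⟨v, hcv, hxv⟩ := Option.bind_eq_some_iff.mp hy
  rw [app_scomp hab] at hxv
  obtain ⟨u, hbv, hau⟩ := Option.bind_eq_some_iff.mp hxv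
  obtain ⟨z, hz⟩ := scomp_isSome hcv hbv
  have hzw : app z y.2 = some u := by rw [app_scomp hz, hcv]; exact hbv
  obtain ⟨y', hy'⟩ := scomp_isSome hzw hau
  refine ⟨z, hz, ?_⟩
  rw [hy']
  congr 1
  apply sop_ext
  intro w
  rw [app_scomp hy', app_scomp hz, app_scomp hxc]
  cases app c w
  · simp
  · simp [app_scomp hab]

lemma assocB {a b c z y : SOp} (hbc : scomp b c = some z) (haz : scomp a z = some y) :
    ∃ x, scomp a b = some x ∧ scomp x c = some y := by
  have hy := app_self y
  rw [app_scomp haz] at hy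
  obtain ⟨v, hzv, hav⟩ := Option.bind_eq_some_iff.mp hy
  rw [app_scomp hbc] at hzv
  obtain ⟨u, hcu, hbu⟩ := Option.bind_eq_some_iff.mp hzv
  obtain ⟨x, hx⟩ := scomp_isSome hbu hav
  have hxu : app x u = some y.1 := by rw [app_scomp hx, hbu]; exact hav
  obtain ⟨y', hy'⟩ := scomp_isSome hcu hxu
  refine ⟨x, hx, ?_⟩
  rw [hy']
  congr 1
  apply sop_ext
  intro w
  rw [app_scomp hy', app_scomp haz, app_scomp hbc]
  cases app c w
  · simp
  · simp [app_scomp hx]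

abbrev sunit : SOp := (([] : List ℕ), ([] : List ℕ))

lemma scomp_unit_left (f : SOp) : scomp sunit f = some f := by
  unfold scomp
  rw [if_pos (List.nil_prefix)]
  simp

lemma scomp_unit_right (f : SOp) : scomp f sunit = some f := by
  unfold scomp
  by_cases h : f.2 = []
  · rw [if_pos (by simp [h])]
    simp only [Option.some.injEq]
    exact Prod.ext (by simp) h.symm
  · rw [if_neg (by simp [List.prefix_nil, h]), if_pos (List.nil_prefix)]
    simp

lemma mem_smul {F G : SWiring} {p : SOp} :
    p ∈ smul F G ↔ ∃ f ∈ F, ∃ g ∈ G, scomp f g = some p := by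
  constructor
  · intro h
    simp only [smul, Finset.mem_biUnion, Finset.mem_product] at h
    obtain ⟨q, ⟨h1, h2⟩, h3⟩ := h
    rw [Option.mem_toFinset, Option.mem_def] at h3
    exact ⟨q.1, h1, q.2, h2, h3⟩
  · rintro ⟨f, h1, g, h2, h3⟩
    simp only [smul, Finset.mem_biUnion, Finset.mem_product]
    exact ⟨(f, g), ⟨h1, h2⟩, by rw [Option.mem_toFinset, Option.mem_def]; exact h3⟩

lemma mem_spow_one {F : SWiring} {f : SOp} (hf : f ∈ F) : f ∈ spow F 1 := by
  show f ∈ smul (spow F 0) F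
  exact mem_smul.mpr ⟨sunit, by simp [spow], f, hf, scomp_unit_left f⟩

lemma spow_mul_mem {F : SWiring} : ∀ {b a : ℕ} {x y z : SOp}, x ∈ spow F a → y ∈ spow F b →
    scomp x y = some z → z ∈ spow F (a + b) := by
  intro b
  induction b with
  | zero =>
    intro a x y z hx hy hxy
    have : y = sunit := by simpa [spow] using hy
    subst this
    rw [scomp_unit_right] at hxy
    cases hxy
    simpa using hx
  | succ b ih =>
    intro a x y z hx hy hxy
    obtain ⟨q, hq, f, hf, hqf⟩ := mem_smul.mp hy
    obtain ⟨w, hw1, hw2⟩ := assocB hqf hxy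
    have hwm : w ∈ spow F (a + b) := ih hx hq hw1
    show z ∈ smul (spow F (a + b)) F
    exact mem_smul.mpr ⟨w, hwm, f, hf, hw2⟩

lemma spow_empty_mono {F : SWiring} {n : ℕ} (h : spow F n = ∅) :
    ∀ m, spow F (n + m) = ∅ := by
  intro m
  induction m with
  | zero => simpa using h
  | succ m ih =>
    show smul (spow F (n + m)) F = ∅
    rw [ih]
    simp [smul]

lemma pump_inc {F : SWiring} {k : ℕ} {c : SOp} (hc : c ∈ spow F k) (h : c.2 <+: c.1) :
    ∀ m, ∃ d, d ∈ spow F (m * k + k) ∧ d.2 = c.2 ∧ c.1 <+: d.1 := by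
  intro m
  induction m with
  | zero => exact ⟨c, by simpa using hc, rfl, List.prefix_rfl⟩
  | succ m ih =>
    obtain ⟨d, hd, hd2, hd1⟩ := ih
    have hdef : scomp d c = some (d.1 ++ c.1.drop d.2.length, c.2) := by
      unfold scomp
      rw [if_pos (hd2 ▸ h)]
    refine ⟨(d.1 ++ c.1.drop d.2.length, c.2), ?_, rfl, ?_⟩
    · have := spow_mul_mem hd hc hdef
      convert this using 2
      ring
    · exact hd1.trans (List.prefix_append _ _)

lemma pump_dec {F : SWiring} {k : ℕ} {c : SOp} (hc : c ∈ spow F k) (h : c.1 <+: c.2)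
    (h2 : ¬ c.2 <+: c.1) :
    ∀ m, ∃ d, d ∈ spow F (m * k + k) ∧ d.1 = c.1 ∧ c.2 <+: d.2 := by
  have hlt : c.1.length < c.2.length := by
    rcases lt_or_ge c.1.length c.2.length with h' | h'
    · exact h'
    · exact absurd (h.eq_of_length (le_antisymm h.length_le h') ▸ List.prefix_rfl) h2
  intro m
  induction m with
  | zero => exact ⟨c, by simpa using hc, rfl, List.prefix_rfl⟩
  | succ m ih =>
    obtain ⟨d, hd, hd1, hd2⟩ := ih
    have hnp : ¬ (d.2 <+: c.1) := by
      intro hp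
      have := hp.length_le
      have := hd2.length_le
      omega
    have hdef : scomp d c = some (d.1, c.2 ++ d.2.drop c.1.length) := by
      unfold scomp
      rw [if_neg hnp, if_pos (h.trans hd2)]
    refine ⟨(d.1, c.2 ++ d.2.drop c.1.length), ?_, hd1, List.prefix_append _ _⟩
    have := spow_mul_mem hd hc hdef
    convert this using 2
    ring

lemma nilpotent_not_cyclic {F : SWiring} (hN : SNilpotent F) : ¬ SCyclic F := by
  rintro ⟨k, hk, c, hc, hcyc⟩
  obtain ⟨n, hn, hempty⟩ := hN
  have key : ∃ d, d ∈ spow F (n * k + k) := by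
    rcases Classical.em (c.2 <+: c.1) with h | h
    · obtain ⟨d, hd, -⟩ := pump_inc hc h n
      exact ⟨d, hd⟩
    · rcases hcyc with h1 | h1
      · obtain ⟨d, hd, -⟩ := pump_dec hc h1 h n
        exact ⟨d, hd⟩
      · exact absurd h1 h
  obtain ⟨d, hd⟩ := key
  have hle : n ≤ n * k + k := by
    have : n * 1 ≤ n * k := Nat.mul_le_mul_left n hk
    omega
  obtain ⟨t, ht⟩ := Nat.exists_eq_add_of_le hle
  rw [ht, spow_empty_mono hempty t] at hd
  exact absurd hd (Finset.notMem_empty d)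

/-! ### Sequences of flows and their products -/

def Cprod : List SOp → Option SOp
  | [] => some sunit
  | g :: t => (Cprod t).bind fun c => scomp g c

lemma Cprod_append_isSome {a b : List SOp} (h : (Cprod (a ++ b)).isSome) :
    (Cprod b).isSome := by
  induction a with
  | nil => simpa using h
  | cons g t ih =>
    apply ih
    by_contra hC
    rw [Option.not_isSome_iff_eq_none] at hC
    rw [List.cons_append] at h
    have heq : Cprod (g :: (t ++ b)) = (Cprod (t ++ b)).bind fun c => scomp g c := rfl
    rw [heq, hC] at h
    simp at h
lemma Cprod_snoc : ∀ {t : List SOp} {c f p : SOp}, Cprod t = some c → scomp c f = some p →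
    Cprod (t ++ [f]) = some p := by
  intro t
  induction t with
  | nil =>
    intro c f p hc hcf
    simp only [Cprod] at hc
    cases hc
    rw [scomp_unit_left] at hcf
    cases hcf
    simp only [List.nil_append, Cprod, Option.bind_some]
    exact scomp_unit_right f
  | cons a t ih =>
    intro c f p hc hcf
    simp only [Cprod] at hc
    obtain ⟨c', hc', hac⟩ := Option.bind_eq_some_iff.mp hc
    obtain ⟨z, hz, haz⟩ := assocA hac hcf
    have heq : Cprod ((a :: t) ++ [f]) = (Cprod (t ++ [f])).bind fun c => scomp a c := rfl
    rw [heq, ih hc' hz]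
    simpa using haz

lemma spow_to_seq {F : SWiring} : ∀ {n : ℕ} {p : SOp}, p ∈ spow F n →
    ∃ l, l.length = n ∧ (∀ f ∈ l, f ∈ F) ∧ Cprod l = some p := by
  intro n
  induction n with
  | zero =>
    intro p hp
    have : p = sunit := by simpa [spow] using hp
    exact ⟨[], rfl, by simp, by simp [Cprod, this]⟩
  | succ n ih =>
    intro p hp
    obtain ⟨q, hq, f, hf, hqf⟩ := mem_smul.mp hp
    obtain ⟨l, hlen, hmem, hC⟩ := ih hq
    refine ⟨l ++ [f], by simp [hlen], ?_, Cprod_snoc hC hqf⟩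
    intro x hx
    rcases List.mem_append.mp hx with h | h
    · exact hmem x h
    · simp at h; subst h; exact hf

lemma seq_to_spow {F : SWiring} : ∀ {l : List SOp} {p : SOp}, (∀ f ∈ l, f ∈ F) →
    Cprod l = some p → p ∈ spow F l.length := by
  intro l
  induction l with
  | nil =>
    intro p _ hC
    simp only [Cprod] at hC
    cases hC
    simp [spow]
  | cons a t ih =>
    intro p hmem hC
    simp only [Cprod] at hC
    obtain ⟨c, hc, hac⟩ := Option.bind_eq_some_iff.mp hC
    have hcm : c ∈ spow F t.length := ih (fun f hf => hmem f (List.mem_cons_of_mem a hf)) hc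
    have ham : a ∈ spow F 1 := mem_spow_one (hmem a (List.mem_cons_self))
    have := spow_mul_mem ham hcm hac
    simpa [Nat.add_comm] using this

/-! ### Infinite defined sequences from non-nilpotency -/

def GoodL (F : SWiring) (l : List SOp) : Prop :=
  ∀ n, ∃ l', l'.length = n ∧ (∀ f ∈ l', f ∈ F) ∧ (Cprod (l' ++ l)).isSome

lemma good_isSome {F : SWiring} {l : List SOp} (hG : GoodL F l) : (Cprod l).isSome := by
  obtain ⟨l', h0, _, hs⟩ := hG 0
  rw [List.length_eq_zero_iff] at h0
  subst h0
  simpa using hs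

lemma root_good {F : SWiring} (hne : ∀ n, (spow F n).Nonempty) : GoodL F [] := by
  intro n
  obtain ⟨p, hp⟩ := hne n
  obtain ⟨l, hlen, hmem, hC⟩ := spow_to_seq hp
  exact ⟨l, hlen, hmem, by rw [List.append_nil, hC]; simp⟩

lemma child_good {F : SWiring} {l : List SOp} (hG : GoodL F l) :
    ∃ g, g ∈ F ∧ GoodL F (g :: l) := by
  classical
  by_contra h
  push_neg at h
  have hBad : ∀ g ∈ F, ∃ n, ∀ l', l'.length = n → (∀ f ∈ l', f ∈ F) →
      ¬ (Cprod (l' ++ (g :: l))).isSome := by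
    intro g hg
    have := h g hg
    unfold GoodL at this
    push_neg at this
    obtain ⟨n, hn⟩ := this
    exact ⟨n, fun l' h1 h2 h3 => (hn l' h1 h2) h3⟩
  choose! ng hng using hBad
  obtain ⟨l', hlen, hmem, hsome⟩ := hG (F.sup ng + 1)
  rcases List.eq_nil_or_concat l' with rfl | ⟨L, b, rfl⟩
  · simp at hlen
  have hbF : b ∈ F := hmem b (by simp [List.concat_eq_append])
  have hLlen : L.length = F.sup ng := by
    simp [List.concat_eq_append] at hlen; omega
  have hngle : ng b ≤ L.length := hLlen ▸ Finset.le_sup hbF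
  set L₂ := L.drop (L.length - ng b) with hL₂
  have hL₂len : L₂.length = ng b := by
    simp [hL₂, List.length_drop]; omega
  have hsplit : L.concat b ++ l = L.take (L.length - ng b) ++ (L₂ ++ (b :: l)) := by
    rw [List.concat_eq_append, hL₂]
    conv_lhs => rw [← List.take_append_drop (L.length - ng b) L]
    rw [List.append_assoc, List.append_assoc, List.singleton_append]
  rw [hsplit] at hsome
  have hsome2 := Cprod_append_isSome hsome
  exact hng b hbF L₂ hL₂len
    (fun f hf => hmem f (by
      rw [List.concat_eq_append, List.mem_append]
      exact Or.inl (List.mem_of_mem_drop hf))) hsome2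

noncomputable def branchL (F : SWiring) (hne : ∀ n, (spow F n).Nonempty) :
    ℕ → {l : List SOp // (∀ f ∈ l, f ∈ F) ∧ GoodL F l}
  | 0 => ⟨[], by simp, root_good hne⟩
  | n + 1 =>
    let p := branchL F hne n
    let hg := child_good p.2.2
    ⟨hg.choose :: p.1, by
      intro f hf
      rcases List.mem_cons.mp hf with rfl | hf
      · exact hg.choose_spec.1
      · exact p.2.1 f hf,
      hg.choose_spec.2⟩

lemma branchL_succ (F : SWiring) (hne : ∀ n, (spow F n).Nonempty) (n : ℕ) :
    ∃ g, g ∈ F ∧ (branchL F hne (n + 1)).1 = g :: (branchL F hne n).1 :=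
  ⟨_, (child_good (branchL F hne n).2.2).choose_spec.1, rfl⟩

/-! ### symbols and bounded lists -/

lemma mem_symbols_left {F : SWiring} {f : SOp} (hf : f ∈ F) {x : ℕ} (hx : x ∈ f.1) :
    x ∈ symbolsS F :=
  Finset.mem_biUnion.mpr ⟨f, hf, Finset.mem_union_left _ (List.mem_toFinset.mpr hx)⟩

lemma mem_symbols_right {F : SWiring} {f : SOp} (hf : f ∈ F) {x : ℕ} (hx : x ∈ f.2) :
    x ∈ symbolsS F :=
  Finset.mem_biUnion.mpr ⟨f, hf, Finset.mem_union_right _ (List.mem_toFinset.mpr hx)⟩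

lemma spow_symbols {F : SWiring} : ∀ {n : ℕ} {p : SOp}, p ∈ spow F n →
    (∀ x ∈ p.1, x ∈ symbolsS F) ∧ (∀ x ∈ p.2, x ∈ symbolsS F) := by
  intro n
  induction n with
  | zero =>
    intro p hp
    have : p = sunit := by simpa [spow] using hp
    subst this
    simp
  | succ n ih =>
    intro p hp
    obtain ⟨q, hq, f, hf, hqf⟩ := mem_smul.mp hp
    obtain ⟨hq1, hq2⟩ := ih hq
    unfold scomp at hqf
    split at hqf
    · cases hqf
      refine ⟨?_, fun x hx => mem_symbols_right hf hx⟩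
      intro x hx
      rcases List.mem_append.mp hx with h | h
      · exact hq1 x h
      · exact mem_symbols_left hf (List.mem_of_mem_drop h)
    · split at hqf
      · cases hqf
        refine ⟨fun x hx => hq1 x hx, ?_⟩
        intro x hx
        rcases List.mem_append.mp hx with h | h
        · exact mem_symbols_right hf h
        · exact hq2 x (List.mem_of_mem_drop h)
      · exact absurd hqf (by simp)

def allLists (E : Finset ℕ) : ℕ → Finset (List ℕ)
  | 0 => {[]}
  | n + 1 => {[]} ∪ E.biUnion fun a => (allLists E n).image (a :: ·)

lemma mem_allLists {E : Finset ℕ} : ∀ {n : ℕ} {l : List ℕ},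
    l.length ≤ n → (∀ x ∈ l, x ∈ E) → l ∈ allLists E n := by
  intro n
  induction n with
  | zero =>
    intro l hl _
    have : l = [] := List.length_eq_zero_iff.mp (Nat.le_zero.mp hl)
    simp [this, allLists]
  | succ n ih =>
    intro l hl hmem
    cases l with
    | nil => simp [allLists]
    | cons a t =>
      simp only [allLists, Finset.mem_union, Finset.mem_biUnion, Finset.mem_image]
      refine Or.inr ⟨a, hmem a (List.mem_cons_self), t, ?_, rfl⟩
      exact ih (by simp at hl; omega) (fun x hx => hmem x (List.mem_cons_of_mem a hx))

lemma exists_future_min (ℓ : ℕ → ℕ) : ∀ (v k₀ : ℕ), ℓ k₀ ≤ v →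
    ∃ k, k₀ ≤ k ∧ ∀ j, k ≤ j → ℓ k ≤ ℓ j := by
  intro v
  induction v with
  | zero =>
    intro k₀ h
    exact ⟨k₀, le_rfl, fun j _ => by omega⟩
  | succ v ih =>
    intro k₀ h
    by_cases hall : ∀ j, k₀ ≤ j → ℓ k₀ ≤ ℓ j
    · exact ⟨k₀, le_rfl, hall⟩
    · push_neg at hall
      obtain ⟨j, hj1, hj2⟩ := hall
      obtain ⟨k, hk1, hk2⟩ := ih j (by omega)
      exact ⟨k, le_trans hj1 hk1, hk2⟩

lemma not_nilpotent_cyclic {F : SWiring} (hnn : ¬ SNilpotent F) : SCyclic F := by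
  classical
  have hne : ∀ n, (spow F n).Nonempty := by
    intro n
    rw [Finset.nonempty_iff_ne_empty]
    intro hemp
    cases n with
    | zero => simp [spow] at hemp
    | succ n => exact hnn ⟨n + 1, Nat.succ_pos n, hemp⟩
  set h := wheightS F with hh
  set SY := symbolsS F with hSY
  have hCsome : ∀ n, ∃ p, Cprod ((branchL F hne n).1) = some p :=
    fun n => Option.isSome_iff_exists.mp (good_isSome (branchL F hne n).2.2)
  choose P hP using hCsome
  have hbllen : ∀ n, ((branchL F hne n).1).length = n := by
    intro n
    induction n with
    | zero => rfl
    | succ n ih =>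
      obtain ⟨g, _, hcons⟩ := branchL_succ F hne n
      rw [hcons]
      simp [ih]
  have hPmem : ∀ n, P n ∈ spow F n := by
    intro n
    have := seq_to_spow ((branchL F hne n).2.1) (hP n)
    rwa [hbllen n] at this
  have hstep : ∀ n, ∃ g ∈ F, scomp g (P n) = some (P (n + 1)) := by
    intro n
    obtain ⟨g, hgF, hcons⟩ := branchL_succ F hne n
    refine ⟨g, hgF, ?_⟩
    have heq : Cprod ((branchL F hne (n + 1)).1)
        = (Cprod ((branchL F hne n).1)).bind fun c => scomp g c := by
      rw [hcons]; rfl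
    rw [hP n, hP (n + 1)] at heq
    simpa using heq.symm
  choose gs hgsF hgs using hstep
  have hseg : ∀ i d, ∃ s ∈ spow F d, scomp s (P i) = some (P (i + d)) := by
    intro i d
    induction d with
    | zero =>
      refine ⟨sunit, by simp [spow], ?_⟩
      simpa using scomp_unit_left (P i)
    | succ d ih =>
      obtain ⟨s, hsmem, hs⟩ := ih
      obtain ⟨x, hx1, hx2⟩ := assocB hs (hgs (i + d))
      refine ⟨x, ?_, hx2⟩
      have := spow_mul_mem (mem_spow_one (hgsF (i + d))) hsmem hx1
      simpa [Nat.add_comm] using this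
  have hBmono : ∀ n, (P n).2 <+: (P (n + 1)).2 := by
    intro n
    have h1 := app_self (P (n + 1))
    rw [app_scomp (hgs n)] at h1
    obtain ⟨v, hv, _⟩ := Option.bind_eq_some_iff.mp h1
    exact (app_eq_some hv).1
  have hBchain : ∀ m n, m ≤ n → (P m).2 <+: (P n).2 := by
    intro m n hmn
    induction n, hmn using Nat.le_induction with
    | base => exact List.prefix_rfl
    | succ n hmn ih => exact ih.trans (hBmono n)
  have hg2le : ∀ n, (gs n).2.length ≤ h := by
    intro n
    have h1 : hOp (gs n) ≤ wheightS F := Finset.le_sup (hgsF n)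
    have h2 : (gs n).2.length ≤ hOp (gs n) := le_max_right _ _
    omega
  by_cases hBst : ∃ k₀, ∀ k, k₀ ≤ k → (P k).2 = (P k₀).2
  · -- CASE I : bodies eventually constant; genuine infinite run
    obtain ⟨k₀, hk₀⟩ := hBst
    have hudef : ∀ k, ∃ u, app (P k) ((P k₀).2) = some u := by
      intro k
      have hpre : (P k).2 <+: (P k₀).2 := by
        rcases le_total k k₀ with hle | hle
        · exact hBchain k k₀ hle
        · rw [hk₀ k hle]
      exact Option.isSome_iff_exists.mp (app_isSome_iff.mpr hpre)
    choose u hu using hudef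
    have hustep : ∀ k, app (gs k) (u k) = some (u (k + 1)) := by
      intro k
      have h1 := hu (k + 1)
      rw [app_scomp (hgs k), hu k] at h1
      simpa using h1
    have hent : ∀ k, ∀ x ∈ u k, x ∈ SY := by
      intro k
      induction k with
      | zero =>
        obtain ⟨hp, hval⟩ := app_eq_some (hu 0)
        intro x hx
        rw [hval] at hx
        rcases List.mem_append.mp hx with hx | hx
        · exact (spow_symbols (hPmem 0)).1 x hx
        · exact (spow_symbols (hPmem k₀)).2 x (List.mem_of_mem_drop hx)
      | succ k ih =>
        obtain ⟨hp, hval⟩ := app_eq_some (hustep k)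
        intro x hx
        rw [hval] at hx
        rcases List.mem_append.mp hx with hx | hx
        · exact mem_symbols_left (hgsF k) hx
        · exact ih x (List.mem_of_mem_drop hx)
    set M : Set ℕ := {k | ∀ j, k ≤ j → (u k).length ≤ (u j).length} with hM
    have hMinf : M.Infinite := by
      apply Set.infinite_of_forall_exists_gt
      intro a
      obtain ⟨k, hk1, hk2⟩ :=
        exists_future_min (fun k => (u k).length) ((u (a + 1)).length) (a + 1) le_rfl
      exact ⟨k, hk2, by omega⟩
    have hsegu : ∀ k, k ∈ M → ∀ d,
        ∃ s, s ∈ spow F d ∧ app s (u k) = some (u (k + d)) ∧ s.2.length ≤ h := by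
      intro k hkM d
      have hkM' : ∀ j, k ≤ j → (u k).length ≤ (u j).length := hkM
      induction d with
      | zero =>
        refine ⟨sunit, by simp [spow], ?_, by simp⟩
        simp [app, sunit]
      | succ d ih =>
        obtain ⟨s, hsmem, hsapp, hslen⟩ := ih
        have hgstep := hustep (k + d)
        obtain ⟨s', hs'⟩ := scomp_isSome hsapp hgstep
        have hs'app : app s' (u k) = some (u (k + d + 1)) := by
          rw [app_scomp hs', hsapp]
          simpa using hgstep
        have hs'mem : s' ∈ spow F (d + 1) := by
          have := spow_mul_mem (mem_spow_one (hgsF (k + d))) hsmem hs'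
          simpa [Nat.add_comm] using this
        refine ⟨s', hs'mem, hs'app, ?_⟩
        obtain ⟨hspre, hsval⟩ := app_eq_some hsapp
        have hlen1 : (u (k + d)).length = s.1.length + ((u k).length - s.2.length) := by
          rw [hsval]; simp [List.length_drop]
        have hs2le : s.2.length ≤ (u k).length := hspre.length_le
        have hmin := hkM' (k + d) (by omega)
        have hss : s.2.length ≤ s.1.length := by omega
        unfold scomp at hs'
        split at hs'
        · have heq2 := congrArg Prod.snd (Option.some.inj hs')
          rw [← heq2]
          exact hslen
        · split at hs'
          · rename_i hpre2
            have heq2 := congrArg Prod.snd (Option.some.inj hs')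
            rw [← heq2]
            have hgl := hg2le (k + d)
            have hpl := hpre2.length_le
            simp only [List.length_append, List.length_drop]
            omega
          · exact absurd hs' (by simp)
    have hmapsto : Set.MapsTo (fun k => (u k).take h) M ↑(allLists SY h) := by
      intro k hk
      refine Finset.mem_coe.mpr (mem_allLists (List.length_take_le _ _) ?_)
      intro x hx
      exact hent k x (List.mem_of_mem_take hx)
    obtain ⟨i, hiM, j, hjM, hij, hEq⟩ :=
      hMinf.exists_ne_map_eq_of_mapsTo hmapsto (allLists SY h).finite_toSet
    have key : ∀ i j : ℕ, i ∈ M → i < j → (u i).take h = (u j).take h → SCyclic F := by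
      intro i j hiM hlt htake
      obtain ⟨s, hsmem, hsapp, hslen⟩ := hsegu i hiM (j - i)
      rw [show i + (j - i) = j by omega] at hsapp
      obtain ⟨hspre, hsval⟩ := app_eq_some hsapp
      have h1 : s.1 <+: u j := ⟨_, hsval.symm⟩
      have h2 : s.2 <+: u j := by
        have e1 : s.2 = (u i).take s.2.length := List.prefix_iff_eq_take.mp hspre
        have e2 : (u i).take s.2.length = ((u i).take h).take s.2.length := by
          rw [List.take_take, min_eq_left hslen]
        have h3 : s.2 <+: (u j).take h := by
          rw [e1, e2, htake]
          exact List.take_prefix _ _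
        exact h3.trans (List.take_prefix _ _)
      refine ⟨j - i, by omega, s, hsmem, ?_⟩
      rcases le_total s.1.length s.2.length with hc | hc
      · exact Or.inl (List.prefix_of_prefix_length_le h1 h2 hc)
      · exact Or.inr (List.prefix_of_prefix_length_le h2 h1 hc)
    rcases hij.lt_or_gt with hlt | hlt
    · exact key i j hiM hlt hEq
    · exact key j i hjM hlt hEq.symm
  · -- CASE II : bodies grow infinitely often; heads are then small
    push_neg at hBst
    set G : Set ℕ := {k | (P k).2 ≠ (P (k + 1)).2} with hG
    have hGinf : G.Infinite := by
      by_contra hfin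
      rw [Set.not_infinite] at hfin
      obtain ⟨N, hN⟩ := hfin.bddAbove
      have hconst : ∀ k, N + 1 ≤ k → (P k).2 = (P (N + 1)).2 := by
        intro k hk
        induction k with
        | zero => omega
        | succ k ih =>
          rcases Nat.lt_or_ge k (N + 1) with hlt | hge
          · have hkeq : k + 1 = N + 1 := by omega
            rw [hkeq]
          · have hkk : (P k).2 = (P (k + 1)).2 := by
              by_contra hne'
              have := hN (show k ∈ G from hne')
              omega
            rw [← hkk]
            exact ih hge
      obtain ⟨k, hk1, hk2⟩ := hBst (N + 1)
      exact hk2 (hconst k hk1)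
    have hA : ∀ k ∈ G, (P k).1.length ≤ h := by
      intro k hk
      have hs := hgs k
      unfold scomp at hs
      split at hs
      · have heq2 := congrArg Prod.snd (Option.some.inj hs)
        exact absurd heq2 hk
      · split at hs
        · rename_i hpre2
          exact le_trans hpre2.length_le (hg2le k)
        · exact absurd hs (by simp)
    have hmapsto : Set.MapsTo (fun k => (P k).1) G ↑(allLists SY h) := by
      intro k hk
      refine Finset.mem_coe.mpr (mem_allLists (hA k hk) ?_)
      intro x hx
      exact (spow_symbols (hPmem k)).1 x hx
    obtain ⟨i, hiG, j, hjG, hij, hEq⟩ :=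
      hGinf.exists_ne_map_eq_of_mapsTo hmapsto (allLists SY h).finite_toSet
    have key : ∀ i j : ℕ, i < j → (P i).1 = (P j).1 → SCyclic F := by
      intro i j hlt hPeq
      obtain ⟨s, hsmem, hs⟩ := hseg i (j - i)
      rw [show i + (j - i) = j by omega] at hs
      refine ⟨j - i, by omega, s, hsmem, ?_⟩
      unfold scomp at hs
      split at hs
      · rename_i hpre
        have h0 := Option.some.inj hs
        obtain ⟨t, ht⟩ := hpre
        have hdt : List.drop s.2.length (P i).1 = t := by rw [← ht, List.drop_left]
        have h1' : (P i).1 = s.1 ++ t := by rw [hPeq, ← h0, hdt]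
        have h2 : s.2 ++ t = s.1 ++ t := ht.trans h1'
        have hse : s.1 = s.2 := (List.append_cancel_right h2).symm
        exact Or.inl (by rw [hse])
      · split at hs
        · rename_i hpre2
          have h0 := Option.some.inj hs
          have h1' : (P i).1 = s.1 := by rw [hPeq, ← h0]
          rw [h1'] at hpre2
          exact Or.inl hpre2
        · exact absurd hs (by simp)
    rcases hij.lt_or_gt with hlt | hlt
    · exact key i j hlt hEq
    · exact key j i hlt hEq.symm

/-- a wiring of the Stack semiring is nilpotent iff it is
acyclic (no power contains a cycle). -/
theorem stack_nilpotent_iff_acyclic (F : SWiring) :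
    SNilpotent F ↔ ¬ SCyclic F := by
  constructor
  · exact nilpotent_not_cyclic
  · intro hnc
    by_contra hnn
    exact hnc (not_nilpotent_cyclic hnn)
end

section
/- Let f = τ(x) ⊣ σ(x) be a decreasing stack operation and g = ρ(x) ⊣ χ(x) an increasing stack operation. Then h(fg) ≤ max(h(f), h(g)), where h denotes height and h(0) = 0. -/
/-- stability of height: for a decreasing stack operation `f`
and an increasing one `g`, `h(fg) ≤ max(h(f), h(g))` (with `h(0) = 0`). -/
theorem height_stable (f g : SOp) (hf : decP f) (hg : incP g) :
    (scomp f g).elim 0 hOp ≤ max (hOp f) (hOp g) := by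
  unfold scomp decP incP at *
  split_ifs with h1 h2
  · have := h1.length_le
    simp [hOp, Option.elim]
    omega
  · have := h2.length_le
    simp [hOp, Option.elim]
    omega
  · simp [hOp]
end

section
/- For any wiring F in the Stack semiring and any n, the height of shortⁿ(F) equals the height of F, where short(F) := F + F↓·F↑, F↓ and F↑ being the decreasing and increasing parts of F. -/
lemma hOp_scomp_le {d i f : SOp} (hd : decP d) (hi : incP i)
    (h : scomp d i = some f) : hOp f ≤ max (hOp d) (hOp i) := by
  unfold scomp at h
  unfold decP at hd; unfold incP at hi
  split_ifs at h with h1 h2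
  · obtain ⟨t, ht⟩ := h1
    cases h
    simp only [hOp, List.length_append, List.length_drop]
    have hb : d.2.length ≤ i.1.length := by
      rw [← ht]; simp
    refine max_le ?_ ?_
    · exact le_max_of_le_right (le_max_of_le_left (by omega))
    · exact le_max_of_le_right (le_max_of_le_right le_rfl)
  · obtain ⟨t, ht⟩ := h2
    cases h
    simp only [hOp, List.length_append, List.length_drop]
    have hb : i.1.length ≤ d.2.length := by
      rw [← ht]; simp
    refine max_le ?_ ?_
    · exact le_max_of_le_left (le_max_of_le_left le_rfl)
    · exact le_max_of_le_left (le_max_of_le_right (by omega))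

lemma wheightS_short (F : SWiring) : wheightS (short F) = wheightS F := by
  apply le_antisymm
  · apply Finset.sup_le
    intro f hf
    rw [short, Finset.mem_union] at hf
    rcases hf with hf | hf
    · exact Finset.le_sup hf
    · rw [smul, Finset.mem_biUnion] at hf
      obtain ⟨⟨d, i⟩, hp, hf⟩ := hf
      rw [Finset.mem_product] at hp
      simp only [Option.mem_toFinset, Option.mem_def] at hf
      have hd := (Finset.mem_filter.mp hp.1)
      have hi := (Finset.mem_filter.mp hp.2)
      calc hOp f ≤ max (hOp d) (hOp i) := hOp_scomp_le hd.2 hi.2 hf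
        _ ≤ wheightS F := max_le (Finset.le_sup hd.1) (Finset.le_sup hi.1)
  · exact Finset.sup_mono (Finset.subset_union_left)

/-- the shortcut operation preserves the height of wirings:
`h(shortⁿ(F)) = h(F)` for all `n`. -/
theorem short_height (F : SWiring) (n : ℕ) :
    wheightS (short^[n] F) = wheightS F := by
  induction n with
  | zero => rfl
  | succ n ih => rw [Function.iterate_succ_apply', wheightS_short, ih]
end

section
/- Let F be a wiring in the Stack semiring and S the number of distinct function symbols appearing in F. If n ≥ (S^{h(F)} + S^{h(F)-1} + ⋯ + 1)², then shortⁿ(F) = sat(F), i.e., the iteration of the shortcut operation stabilizes after at most that many steps. -/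
/-! ### Auxiliary lemmas -/

/-- Good stack operations: bounded height, symbols in `s`. -/
def okP (s : Finset ℕ) (h : ℕ) (f : SOp) : Prop :=
  f.1.length ≤ h ∧ f.2.length ≤ h ∧ (∀ a ∈ f.1, a ∈ s) ∧ (∀ a ∈ f.2, a ∈ s)

lemma scomp_ok {s : Finset ℕ} {h : ℕ} {f g r : SOp}
    (hf : okP s h f) (hg : okP s h g) (hdf : decP f) (hig : incP g)
    (hr : scomp f g = some r) : okP s h r := by
  obtain ⟨hf1, hf2, hf1s, hf2s⟩ := hf
  obtain ⟨hg1, hg2, hg1s, hg2s⟩ := hg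
  unfold scomp at hr
  split_ifs at hr with h1 h2
  · have hle := h1.length_le
    cases hr
    refine ⟨?_, hg2, ?_, hg2s⟩
    · simp only [List.length_append, List.length_drop]
      unfold decP at hdf; omega
    · intro a ha
      rcases List.mem_append.1 ha with ha | ha
      · exact hf1s a ha
      · exact hg1s a (List.mem_of_mem_drop ha)
  · have hle := h2.length_le
    cases hr
    refine ⟨hf1, ?_, hf1s, ?_⟩
    · simp only [List.length_append, List.length_drop]
      unfold incP at hig; omega
    · intro a ha
      rcases List.mem_append.1 ha with ha | ha
      · exact hg2s a ha
      · exact hf2s a (List.mem_of_mem_drop ha)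

lemma short_ok {s : Finset ℕ} {h : ℕ} {G : SWiring}
    (hG : ∀ f ∈ G, okP s h f) : ∀ f ∈ short G, okP s h f := by
  intro f hf
  rcases Finset.mem_union.1 hf with hf | hf
  · exact hG f hf
  · rcases Finset.mem_biUnion.1 hf with ⟨p, hp, hfp⟩
    rcases Finset.mem_product.1 hp with ⟨hp1, hp2⟩
    rcases Finset.mem_filter.1 hp1 with ⟨hp1G, hp1d⟩
    rcases Finset.mem_filter.1 hp2 with ⟨hp2G, hp2i⟩
    have := Option.mem_toFinset.1 hfp
    exact scomp_ok (hG _ hp1G) (hG _ hp2G) hp1d hp2i this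

lemma iterate_ok (F : SWiring) (k : ℕ) :
    ∀ f ∈ short^[k] F, okP (symbolsS F) (wheightS F) f := by
  induction k with
  | zero =>
    intro f hf
    have hh : hOp f ≤ wheightS F := Finset.le_sup hf
    refine ⟨le_trans (le_max_left _ _) hh, le_trans (le_max_right _ _) hh, ?_, ?_⟩ <;>
      intro a ha <;>
      exact Finset.mem_biUnion.2 ⟨f, hf, by simp [ha]⟩
  | succ k ih =>
    rw [Function.iterate_succ_apply']
    exact short_ok ih

/-- Lists of length ≤ n with entries in `s`. -/
def listsLe (s : Finset ℕ) : ℕ → Finset (List ℕ)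
  | 0 => {[]}
  | n + 1 => {[]} ∪ (s ×ˢ listsLe s n).image (fun p => p.1 :: p.2)

lemma mem_listsLe {s : Finset ℕ} {n : ℕ} {l : List ℕ}
    (hl : l.length ≤ n) (hs : ∀ a ∈ l, a ∈ s) : l ∈ listsLe s n := by
  induction n generalizing l with
  | zero =>
    have : l = [] := List.length_eq_zero_iff.1 (Nat.le_zero.1 hl)
    simp [listsLe, this]
  | succ n ih =>
    cases l with
    | nil => simp [listsLe]
    | cons a t =>
      refine Finset.mem_union.2 (Or.inr (Finset.mem_image.2 ⟨(a, t), ?_, rfl⟩))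
      refine Finset.mem_product.2 ⟨hs a (by simp), ih ?_ ?_⟩
      · simp only [List.length_cons] at hl
        show t.length ≤ n
        omega
      · exact fun b hb => hs b (by simp [hb])

lemma card_listsLe (s : Finset ℕ) (n : ℕ) :
    (listsLe s n).card ≤ ∑ i ∈ Finset.range (n + 1), s.card ^ i := by
  induction n with
  | zero => simp [listsLe]
  | succ n ih =>
    have h1 : (listsLe s (n + 1)).card ≤ 1 + s.card * (listsLe s n).card := by
      calc (listsLe s (n + 1)).card
          ≤ ({([] : List ℕ)} : Finset (List ℕ)).card
            + ((s ×ˢ listsLe s n).image (fun p => p.1 :: p.2)).card :=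
            Finset.card_union_le _ _
        _ ≤ 1 + s.card * (listsLe s n).card := by
            have := Finset.card_image_le
              (s := s ×ˢ listsLe s n) (f := fun p : ℕ × List ℕ => p.1 :: p.2)
            simp only [Finset.card_singleton, Finset.card_product] at *
            omega
    calc (listsLe s (n + 1)).card ≤ 1 + s.card * (listsLe s n).card := h1
      _ ≤ 1 + s.card * ∑ i ∈ Finset.range (n + 1), s.card ^ i :=
          by exact Nat.add_le_add_left (Nat.mul_le_mul_left _ ih) 1
      _ = ∑ i ∈ Finset.range (n + 2), s.card ^ i := by
          conv_rhs => rw [geom_sum_succ]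
          ring

lemma card_iterate_le (F : SWiring) (k : ℕ) :
    (short^[k] F).card ≤ (∑ i ∈ Finset.range (wheightS F + 1), (symbolsS F).card ^ i) ^ 2 := by
  set s := symbolsS F
  set h := wheightS F
  have hsub : short^[k] F ⊆ listsLe s h ×ˢ listsLe s h := by
    intro f hf
    obtain ⟨h1, h2, h3, h4⟩ := iterate_ok F k f hf
    exact Finset.mem_product.2 ⟨mem_listsLe h1 h3, mem_listsLe h2 h4⟩
  calc (short^[k] F).card ≤ (listsLe s h ×ˢ listsLe s h).card := Finset.card_le_card hsub
    _ = (listsLe s h).card * (listsLe s h).card := Finset.card_product _ _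
    _ ≤ (∑ i ∈ Finset.range (h + 1), s.card ^ i) ^ 2 := by
        rw [sq]; exact Nat.mul_le_mul (card_listsLe s h) (card_listsLe s h)

lemma subset_short (G : SWiring) : G ⊆ short G := Finset.subset_union_left

lemma iterate_mono (F : SWiring) {m k : ℕ} (h : m ≤ k) :
    short^[m] F ⊆ short^[k] F := by
  induction k with
  | zero => rw [Nat.le_zero.1 h]
  | succ k ih =>
    rcases Nat.lt_or_ge m (k + 1) with h' | h'
    · rw [Function.iterate_succ_apply']
      exact (ih (by omega)).trans (subset_short _)
    · rw [Nat.le_antisymm h h']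

lemma iterate_stab (F : SWiring) {m : ℕ}
    (hm : short^[m + 1] F = short^[m] F) {k : ℕ} (hk : m ≤ k) :
    short^[k] F = short^[m] F := by
  induction k with
  | zero => rw [Nat.le_zero.1 hk]
  | succ k ih =>
    rcases Nat.lt_or_ge m (k + 1) with h' | h'
    · have h2 := ih (by omega)
      calc short^[k + 1] F = short^[1] (short^[k] F) := by
              rw [← Function.iterate_add_apply, Nat.add_comm]
            _ = short^[1] (short^[m] F) := by rw [h2]
            _ = short^[m + 1] F := by rw [← Function.iterate_add_apply, Nat.add_comm]
            _ = short^[m] F := hm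
    · rw [Nat.le_antisymm hk h']

lemma short_empty : short (∅ : SWiring) = ∅ := by
  simp [short, smul, decF, incF]

/-- stability of saturation: with `S` the number of distinct
function symbols of `F`, if `n ≥ (S^{h(F)} + ⋯ + S + 1)²` then
`shortⁿ(F) = sat(F)`. -/
theorem saturation_stabilizes (F : SWiring) (n : ℕ)
    (hn : (∑ i ∈ Finset.range (wheightS F + 1), (symbolsS F).card ^ i) ^ 2 ≤ n) :
    ((short^[n] F : Finset SOp) : Set SOp) = satSet F := by
  set B := (∑ i ∈ Finset.range (wheightS F + 1), (symbolsS F).card ^ i) ^ 2 with hBdef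
  have hB1 : 1 ≤ B := by
    have h0 : (1 : ℕ) ≤ ∑ i ∈ Finset.range (wheightS F + 1), (symbolsS F).card ^ i := by
      calc (1 : ℕ) = (symbolsS F).card ^ 0 := by simp
        _ ≤ _ := Finset.single_le_sum (fun i _ => Nat.zero_le _)
              (Finset.mem_range.2 (Nat.succ_pos _))
    calc (1 : ℕ) = 1 ^ 2 := by norm_num
      _ ≤ B := Nat.pow_le_pow_left h0 2
  have hex : ∃ m < n, short^[m + 1] F = short^[m] F := by
    by_contra hc
    push_neg at hc
    by_cases hF : F = ∅
    · exact hc 0 (by omega) (by simp [hF, short_empty])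
    · have hcard : ∀ m, m ≤ n → F.card + m ≤ (short^[m] F).card := by
        intro m
        induction m with
        | zero => simp
        | succ m ih =>
          intro hm
          have hne := hc m (by omega)
          have hss : short^[m] F ⊂ short^[m + 1] F :=
            (Finset.ssubset_iff_subset_ne).2 ⟨iterate_mono F (Nat.le_succ m), fun h => hne h.symm⟩
          have h1 := Finset.card_lt_card hss
          have h2 := ih (by omega)
          omega
      have h1 : 1 ≤ F.card := Finset.card_pos.2 (Finset.nonempty_of_ne_empty hF)
      have h2 := hcard n le_rfl
      have h3 := card_iterate_le F n
      omega
  obtain ⟨m, hmn, hm⟩ := hex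
  apply Set.Subset.antisymm
  · exact fun x hx => Set.mem_iUnion.2 ⟨n, hx⟩
  · intro x hx
    obtain ⟨k, hk⟩ := Set.mem_iUnion.1 hx
    rcases le_or_gt k n with h | h
    · exact iterate_mono F h hk
    · have h1 : short^[k] F = short^[m] F := iterate_stab F hm (by omega)
      have h2 : short^[n] F = short^[m] F := iterate_stab F hm (by omega)
      rw [h1, ← h2] at hk
      exact hk
end

section
/- For stack operations f and g, the product fg is a cycle if and only if gf is a cycle. -/
private lemma rot_aux (f g p : SOp) (h : scomp f g = some p) (hc : isCycleS p) :
    ∃ q, scomp g f = some q ∧ isCycleS q := by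
  obtain ⟨a, b⟩ := f
  obtain ⟨c, d⟩ := g
  simp only [scomp] at h ⊢
  split_ifs at h with h1 h2
  · -- b <+: c
    obtain ⟨u, rfl⟩ := h1
    rw [List.drop_left] at h
    obtain rfl : ((a ++ u, d) : SOp) = p := Option.some.inj h
    by_cases hda : d <+: a
    · rw [if_pos hda]
      exact ⟨_, rfl, Or.inr ((List.prefix_append b u).trans (List.prefix_append _ _))⟩
    · have hA : a <+: d := by
        rcases hc with hl | hr
        · exact (List.prefix_append a u).trans hl
        · rcases List.prefix_or_prefix_of_prefix hr (List.prefix_append a u) with h' | h'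
          · exact absurd h' hda
          · exact h'
      obtain ⟨v, rfl⟩ := hA
      rw [if_neg hda, if_pos (List.prefix_append a v), List.drop_left]
      refine ⟨_, rfl, ?_⟩
      rcases hc with hl | hr
      · exact Or.inl ((List.prefix_append_right_inj b).mpr
          ((List.prefix_append_right_inj a).mp hl))
      · exact Or.inr ((List.prefix_append_right_inj b).mpr
          ((List.prefix_append_right_inj a).mp hr))
  · -- c <+: b
    obtain ⟨u, rfl⟩ := h2
    rw [List.drop_left] at h
    obtain rfl : ((a, d ++ u) : SOp) = p := Option.some.inj h
    by_cases hda : d <+: a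
    · obtain ⟨w, rfl⟩ := hda
      rw [if_pos (List.prefix_append d w), List.drop_left]
      refine ⟨_, rfl, ?_⟩
      rcases hc with hl | hr
      · exact Or.inl ((List.prefix_append_right_inj c).mpr
          ((List.prefix_append_right_inj d).mp hl))
      · exact Or.inr ((List.prefix_append_right_inj c).mpr
          ((List.prefix_append_right_inj d).mp hr))
    · have hA : a <+: d := by
        rcases hc with hl | hr
        · rcases List.prefix_or_prefix_of_prefix hl (List.prefix_append d u) with h' | h'
          · exact h'
          · exact absurd h' hda
        · exact absurd ((List.prefix_append d u).trans hr) hda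
      obtain ⟨v, rfl⟩ := hA
      rw [if_neg hda, if_pos (List.prefix_append a v), List.drop_left]
      exact ⟨_, rfl, Or.inl ((List.prefix_append c u).trans (List.prefix_append _ _))⟩

/-- rotation: for stack operations `f`, `g`, the product `fg`
is a cycle iff `gf` is a cycle. -/
theorem rotation_lemma (f g : SOp) :
    (∃ p, scomp f g = some p ∧ isCycleS p) ↔
    (∃ q, scomp g f = some q ∧ isCycleS q) := by
  constructor
  · rintro ⟨p, hp, hc⟩; exact rot_aux f g p hp hc
  · rintro ⟨q, hq, hc⟩; exact rot_aux g f q hq hc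
end

section
/- A unary query Q = (D, P, G) succeeds if and only if the flow ACCEPT(x) ⊣ START(x) belongs to ⟦G⟧ Pⁿ ⟦D⟧ for some n, where ⟦D⟧ and ⟦G⟧ are the Stack-semiring encodings of the data and goal. -/
/-! Unary logic programming.  A closed unary term `τ(c)` is a pair
`(τ, c)` of a sequence of unary symbols and a constant.  A unary program is a
wiring of the Stack semiring, its elements read as clauses `τ(x) ⊣ σ(x)`. -/

/-- A closed unary term `τ(c)`. -/
abbrev CT := List ℕ × ℕ

/-- Derivability by resolution from the facts `d ⊣` (`d ∈ D`) and the clauses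
`τ(x) ⊣ σ(x)` of `P`. -/
inductive Derive (D : Finset CT) (P : SWiring) : CT → Prop
  | fact {d : CT} : d ∈ D → Derive D P d
  | step {f : SOp} {μ : List ℕ} {c : ℕ} :
      f ∈ P → Derive D P (f.2 ++ μ, c) → Derive D P (f.1 ++ μ, c)

/-- A unary query `(D, P, G)` succeeds when the goal is derivable. -/
def Succeeds (D : Finset CT) (P : SWiring) (G : CT) : Prop := Derive D P G

/-- Symbol renaming keeping program/data symbols clear of the fresh
symbols: unary program symbols `s ↦ 2s+3`. -/
def rl (s : ℕ) : ℕ := 2 * s + 3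

/-- The unary symbol `𝐜` associated to the constant `c`. -/
def cSym (c : ℕ) : ℕ := 2 * c + 2

/-- The fresh unary symbol `START`. -/
def START : ℕ := 0

/-- The fresh unary symbol `ACCEPT`. -/
def ACCEPT : ℕ := 1

/-- Encoding of a unary data: `⟦D⟧ = { τ(𝐜(x)) ⊣ START(x) : τ(c) ∈ D }`. -/
def encD (D : Finset CT) : SWiring :=
  D.image fun d => (d.1.map rl ++ [cSym d.2], [START])

/-- Encoding of a unary goal `G = τ(c)`: `⟦G⟧ = ACCEPT(x) ⊣ τ(𝐜(x))`. -/
def encG (G : CT) : SOp := ([ACCEPT], G.1.map rl ++ [cSym G.2])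

/-- The program part of a query, with its symbols renamed by `rl`. -/
def encP (P : SWiring) : SWiring := P.image fun f => (f.1.map rl, f.2.map rl)

lemma scomp_eq_some_iff {f g p : SOp} : scomp f g = some p ↔
    (f.2 <+: g.1 ∨ g.1 <+: f.2) ∧
      p = (f.1 ++ g.1.drop f.2.length, g.2 ++ f.2.drop g.1.length) := by
  unfold scomp
  split_ifs with h1 h2
  · have : f.2.drop g.1.length = [] := by
      rw [List.drop_eq_nil_iff]; exact h1.length_le
    simp [this, h1, eq_comm]
  · have : g.1.drop f.2.length = [] := by
      rw [List.drop_eq_nil_iff]; exact h2.length_le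
    simp [this, h2, eq_comm]
  · simp [h1, h2]

/-- Action of a stack operation on a word. -/
def act (f : SOp) (w : List ℕ) : Option (List ℕ) :=
  if f.2 <+: w then some (f.1 ++ w.drop f.2.length) else none

lemma act_eq_some_iff {f : SOp} {w v : List ℕ} :
    act f w = some v ↔ ∃ t, w = f.2 ++ t ∧ v = f.1 ++ t := by
  unfold act
  split_ifs with h
  · obtain ⟨t, rfl⟩ := h
    simp [eq_comm]
  · simp only [reduceCtorEq, false_iff]
    rintro ⟨t, rfl, rfl⟩
    exact h (List.prefix_append _ _)

lemma act_self (f : SOp) : act f f.2 = some f.1 := by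
  simp [act_eq_some_iff]

lemma act_scomp {f g p : SOp} (h : scomp f g = some p) (w : List ℕ) :
    (act g w).bind (act f) = act p w := by
  obtain ⟨a, b⟩ := f
  obtain ⟨c, d⟩ := g
  rw [scomp_eq_some_iff] at h
  obtain ⟨hc, rfl⟩ := h
  simp only at hc ⊢
  rcases hc with ⟨u, rfl⟩ | ⟨u, rfl⟩
  · -- c = b ++ u
    rw [show (b ++ u).drop b.length = u from List.drop_left,
      show b.drop (b ++ u).length = [] from
        List.drop_eq_nil_of_le (by simp), List.append_nil]
    rcases em (d <+: w) with ⟨t, rfl⟩ | hw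
    · simp [act, List.append_assoc]
    · simp [act, hw]
  · -- b = c ++ u
    rw [show c.drop (c ++ u).length = [] from
        List.drop_eq_nil_of_le (by simp), List.append_nil,
      show (c ++ u).drop c.length = u from List.drop_left]
    rcases em (d <+: w) with ⟨t, rfl⟩ | hw
    · rcases em (u <+: t) with ⟨t', rfl⟩ | hut
      · simp [act, List.append_assoc]
      · have h1 : ¬ (c ++ u <+: c ++ t) := by
          rw [List.prefix_append_right_inj]; exact hut
        have h2 : ¬ (d ++ u <+: d ++ t) := by
          rw [List.prefix_append_right_inj]; exact hut
        simp [act, h1, h2, List.drop_left]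
    · have h2 : ¬ (d ++ u <+: w) := fun h => hw ((List.prefix_append d u).trans h)
      simp [act, hw, h2]

lemma scomp_defined {f g : SOp} {w y v : List ℕ}
    (h1 : act g w = some y) (h2 : act f y = some v) : ∃ p, scomp f g = some p := by
  rw [act_eq_some_iff] at h1 h2
  obtain ⟨t, rfl, rfl⟩ := h1
  obtain ⟨s, hs, rfl⟩ := h2
  have hfc : f.2 <+: g.1 ++ t := ⟨s, hs.symm⟩
  have hcc : g.1 <+: g.1 ++ t := List.prefix_append _ _
  rcases List.prefix_or_prefix_of_prefix hfc hcc with h | h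
  · exact ⟨_, scomp_eq_some_iff.2 ⟨Or.inl h, rfl⟩⟩
  · exact ⟨_, scomp_eq_some_iff.2 ⟨Or.inr h, rfl⟩⟩

lemma act_ext {p q : SOp} (h : ∀ w, act p w = act q w) : p = q := by
  have h1 := (h p.2).symm.trans (act_self p)
  have h2 := (h q.2).trans (act_self q)
  rw [act_eq_some_iff] at h1 h2
  obtain ⟨t, ht, ht'⟩ := h1
  obtain ⟨s, hs, hs'⟩ := h2
  have hl1 := congrArg List.length ht
  have hl2 := congrArg List.length hs
  simp only [List.length_append] at hl1 hl2
  have : t = [] := List.eq_nil_of_length_eq_zero (by omega)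
  subst this
  simp only [List.append_nil] at ht ht'
  exact Prod.ext ht' ht

lemma scomp_assoc_some {f g h p s : SOp} (h1 : scomp f g = some p)
    (h2 : scomp p h = some s) : ∃ r, scomp g h = some r ∧ scomp f r = some s := by
  -- the action of s is f ∘ g ∘ h
  have hact : ∀ w, ((act h w).bind (act g)).bind (act f) = act s w := by
    intro w
    rw [Option.bind_assoc]
    rw [show ((act h w).bind fun x => (act g x).bind (act f)) = (act h w).bind (act p) from ?_,
      act_scomp h2]
    rcases hh : act h w with _ | y
    · simp
    · simp [act_scomp h1 y]
  have hs := act_self s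
  rw [← hact s.2] at hs
  rcases hh : act h s.2 with _ | y
  · rw [hh] at hs; simp at hs
  rw [hh, Option.bind_some] at hs
  rcases hg : act g y with _ | z
  · rw [hg] at hs; simp at hs
  rw [hg, Option.bind_some] at hs
  obtain ⟨r, hr⟩ := scomp_defined hh hg
  refine ⟨r, hr, ?_⟩
  have hract : ∀ w, (act r w).bind (act f) = ((act h w).bind (act g)).bind (act f) := by
    intro w; rw [act_scomp hr w]
  have hry : act r s.2 = some z := by
    rw [← act_scomp hr s.2, hh, Option.bind_some, hg]
  obtain ⟨s', hs'⟩ := scomp_defined hry hs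
  have : s' = s := by
    apply act_ext
    intro w
    rw [← act_scomp hs' w, hract w, hact w]
  rwa [this] at hs'

lemma scomp_assoc (f g h : SOp) :
    (scomp f g).bind (fun p => scomp p h) = (scomp g h).bind (fun r => scomp f r) := by
  rcases e1 : scomp f g with _ | p
  · -- f·g undefined: show RHS none
    simp only [Option.bind_none]
    rcases e2 : scomp g h with _ | r
    · simp
    · simp only [Option.bind_some]
      rcases e3 : scomp f r with _ | s
      · rfl
      · exfalso
        -- act of s nonempty, decompose
        have hs := act_self s
        rw [← act_scomp e3 s.2] at hs
        rcases hh : act r s.2 with _ | y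
        · rw [hh] at hs; simp at hs
        rw [hh, Option.bind_some] at hs
        rw [← act_scomp e2 s.2] at hh
        rcases hh2 : act h s.2 with _ | z
        · rw [hh2] at hh; simp at hh
        rw [hh2, Option.bind_some] at hh
        obtain ⟨p, hp⟩ := scomp_defined hh hs
        rw [e1] at hp; exact absurd hp (by simp)
  · simp only [Option.bind_some]
    rcases e2 : scomp p h with _ | s
    · -- p·h undefined: show RHS none
      rcases e3 : scomp g h with _ | r
      · simp
      · simp only [Option.bind_some]
        rcases e4 : scomp f r with _ | s'
        · rfl
        · exfalso
          have hs := act_self s'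
          rw [← act_scomp e4 s'.2] at hs
          rcases hh : act r s'.2 with _ | y
          · rw [hh] at hs; simp at hs
          rw [hh, Option.bind_some] at hs
          rw [← act_scomp e3 s'.2] at hh
          rcases hh2 : act h s'.2 with _ | z
          · rw [hh2] at hh; simp at hh
          rw [hh2, Option.bind_some] at hh
          -- act g z = some y, act f y = some _, so f·g and then p·h defined
          have hpy : act p z = some (s'.1) := by
            rw [← act_scomp e1 z, hh, Option.bind_some]; exact hs
          obtain ⟨q, hq⟩ := scomp_defined hh2 hpy
          rw [e2] at hq; exact absurd hq (by simp)
    · obtain ⟨r, hr, hfr⟩ := scomp_assoc_some e1 e2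
      rw [hr, Option.bind_some, hfr]


lemma mem_smul_s17 {A B : SWiring} {x : SOp} :
    x ∈ smul A B ↔ ∃ a ∈ A, ∃ b ∈ B, scomp a b = some x := by
  simp only [smul, Finset.mem_biUnion, Finset.mem_product, Option.mem_toFinset, Option.mem_def]
  constructor
  · rintro ⟨⟨a, b⟩, ⟨ha, hb⟩, h⟩
    exact ⟨a, ha, b, hb, h⟩
  · rintro ⟨a, ha, b, hb, h⟩
    exact ⟨⟨a, b⟩, ⟨ha, hb⟩, h⟩

lemma smul_assoc' (A B C : SWiring) : smul (smul A B) C = smul A (smul B C) := by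
  ext x
  simp only [mem_smul_s17]
  constructor
  · rintro ⟨p, ⟨a, ha, b, hb, hab⟩, c, hc, hpc⟩
    have h := scomp_assoc a b c
    rw [hab, Option.bind_some, hpc] at h
    rcases e : scomp b c with _ | r
    · rw [e, Option.bind_none] at h; exact absurd h.symm (by simp)
    · rw [e, Option.bind_some] at h
      exact ⟨a, ha, r, ⟨b, hb, c, hc, e⟩, h.symm⟩
  · rintro ⟨a, ha, r, ⟨b, hb, c, hc, hbc⟩, har⟩
    have h := scomp_assoc a b c
    rw [hbc, Option.bind_some, har] at h
    rcases e : scomp a b with _ | p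
    · rw [e, Option.bind_none] at h; exact absurd h (by simp)
    · rw [e, Option.bind_some] at h
      exact ⟨p, ⟨a, ha, b, hb, e⟩, c, hc, h⟩

lemma one_scomp (g : SOp) : scomp (([] : List ℕ), ([] : List ℕ)) g = some g := by
  unfold scomp
  rw [if_pos List.nil_prefix]
  simp

lemma scomp_one (f : SOp) : scomp f (([] : List ℕ), ([] : List ℕ)) = some f := by
  unfold scomp
  split_ifs with h1 h2
  · rw [List.prefix_nil] at h1
    rw [List.drop_nil, List.append_nil, ← h1]
  · simp
  · exact absurd List.nil_prefix h2

lemma one_smul' (A : SWiring) : smul {(([] : List ℕ), ([] : List ℕ))} A = A := by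
  ext x
  rw [mem_smul_s17]
  constructor
  · rintro ⟨a, ha, b, hb, h⟩
    rw [Finset.mem_singleton] at ha
    subst ha
    rw [one_scomp] at h
    obtain rfl := Option.some_injective _ h
    exact hb
  · intro hx
    exact ⟨_, Finset.mem_singleton_self _, x, hx, one_scomp x⟩

lemma smul_one' (A : SWiring) : smul A {(([] : List ℕ), ([] : List ℕ))} = A := by
  ext x
  rw [mem_smul_s17]
  constructor
  · rintro ⟨a, ha, b, hb, h⟩
    rw [Finset.mem_singleton] at hb
    subst hb
    rw [scomp_one] at h
    obtain rfl := Option.some_injective _ h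
    exact ha
  · intro hx
    exact ⟨x, hx, _, Finset.mem_singleton_self _, scomp_one x⟩

lemma spow_succ_left (F : SWiring) (n : ℕ) : spow F (n + 1) = smul F (spow F n) := by
  induction n with
  | zero =>
      rw [show spow F (0 + 1) = smul (spow F 0) F from rfl,
        show spow F 0 = ({(([] : List ℕ), ([] : List ℕ))} : SWiring) from rfl,
        one_smul', smul_one']
  | succ n ih =>
      rw [show spow F (n + 1 + 1) = smul (spow F (n + 1)) F from rfl, ih, smul_assoc',
        show smul (spow F n) F = spow F (n + 1) from rfl, ih]

lemma rl_inj : Function.Injective rl := by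
  intro x y h
  simp only [rl] at h
  omega

lemma rl_not_mem (c : ℕ) (L : List ℕ) : cSym c ∉ L.map rl := by
  simp only [List.mem_map, not_exists]
  rintro s ⟨-, hs⟩
  simp only [rl, cSym] at hs
  omega

lemma map_rl_prefix {a b : List ℕ} (h : a.map rl <+: b.map rl) : a <+: b := by
  have h1 : a.map rl = ((b.take a.length).map rl) := by
    have h2 := List.prefix_iff_eq_take.mp h
    rw [h2, List.length_map, ← List.map_take]
  have : a = b.take a.length := List.map_injective_iff.mpr rl_inj h1
  rw [this]
  exact List.take_prefix _ _

lemma enc_inj {μ ν : List ℕ} {c c' : ℕ}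
    (h : μ.map rl ++ [cSym c] = ν.map rl ++ [cSym c']) : μ = ν ∧ c = c' := by
  have hlen : (μ.map rl).length = (ν.map rl).length := by
    have := congrArg List.length h
    simp only [List.length_append, List.length_map, List.length_singleton] at this
    simp only [List.length_map]
    omega
  obtain ⟨h1, h2⟩ := List.append_inj h hlen
  refine ⟨List.map_injective_iff.mpr rl_inj h1, ?_⟩
  simp only [List.cons.injEq, cSym] at h2
  omega

lemma prefix_enc {L μ : List ℕ} {c : ℕ} (h : L.map rl <+: μ.map rl ++ [cSym c]) :
    L <+: μ := by
  rcases le_or_gt L.length μ.length with hle | hlt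
  · apply map_rl_prefix
    exact List.prefix_of_prefix_length_le h (List.prefix_append _ _) (by simpa using hle)
  · exfalso
    have heq : L.map rl = μ.map rl ++ [cSym c] := by
      apply h.eq_of_length_le
      simp only [List.length_append, List.length_map, List.length_singleton]
      omega
    apply rl_not_mem c L
    rw [heq]
    simp

lemma mem_smul_spow_encD {D : Finset CT} {P : SWiring} {n : ℕ} {q : SOp}
    (hq : q ∈ smul (spow (encP P) n) (encD D)) :
    ∃ μ c, q = (μ.map rl ++ [cSym c], [START]) ∧ Derive D P (μ, c) := by
  induction n generalizing q with
  | zero =>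
    rw [mem_smul_s17] at hq
    obtain ⟨p, hp, d, hd, hpd⟩ := hq
    rw [show spow (encP P) 0 = ({(([] : List ℕ), ([] : List ℕ))} : SWiring) from rfl,
      Finset.mem_singleton] at hp
    subst hp
    rw [one_scomp] at hpd
    obtain rfl := Option.some_injective _ hpd
    rw [encD, Finset.mem_image] at hd
    obtain ⟨t, ht, rfl⟩ := hd
    exact ⟨t.1, t.2, rfl, Derive.fact ht⟩
  | succ n ih =>
    rw [spow_succ_left, smul_assoc', mem_smul_s17] at hq
    obtain ⟨e, he, q', hq', heq⟩ := hq
    obtain ⟨μ, c, rfl, hder⟩ := ih hq'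
    rw [encP, Finset.mem_image] at he
    obtain ⟨f, hf, rfl⟩ := he
    rw [scomp_eq_some_iff] at heq
    obtain ⟨hcomp, rfl⟩ := heq
    simp only at hcomp
    rcases hcomp with hpre | hpre
    · have hfp : f.2 <+: μ := prefix_enc hpre
      obtain ⟨ρ, rfl⟩ := hfp
      refine ⟨f.1 ++ ρ, c, ?_, Derive.step hf hder⟩
      have e1 : (f.2 ++ ρ).map rl ++ [cSym c] = f.2.map rl ++ (ρ.map rl ++ [cSym c]) := by
        simp [List.map_append, List.append_assoc]
      have e2 : ((f.2 ++ ρ).map rl ++ [cSym c]).drop (f.2.map rl).length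
          = ρ.map rl ++ [cSym c] := by
        rw [e1]; exact List.drop_left
      have e3 : (f.2.map rl).drop ((f.2 ++ ρ).map rl ++ [cSym c]).length = [] := by
        apply List.drop_eq_nil_of_le
        simp only [List.length_append, List.length_map, List.length_singleton]
        omega
      rw [e2, e3]
      simp [List.map_append, List.append_assoc]
    · exfalso
      exact rl_not_mem c f.2 (hpre.sublist.subset (by simp))

lemma derive_mem {D : Finset CT} {P : SWiring} {t : CT} (h : Derive D P t) :
    ∃ n, (t.1.map rl ++ [cSym t.2], [START]) ∈ smul (spow (encP P) n) (encD D) := by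
  induction h with
  | @fact d hd =>
    refine ⟨0, ?_⟩
    rw [mem_smul_s17]
    exact ⟨([], []), Finset.mem_singleton_self _, (d.1.map rl ++ [cSym d.2], [START]),
      Finset.mem_image_of_mem _ hd, one_scomp _⟩
  | @step f μ c hf _ ih =>
    obtain ⟨n, hn⟩ := ih
    refine ⟨n + 1, ?_⟩
    rw [spow_succ_left, smul_assoc', mem_smul_s17]
    refine ⟨(f.1.map rl, f.2.map rl), Finset.mem_image_of_mem _ hf, _, hn, ?_⟩
    rw [scomp_eq_some_iff]
    constructor
    · left
      show f.2.map rl <+: (f.2 ++ μ).map rl ++ [cSym c]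
      rw [List.map_append, List.append_assoc]
      exact List.prefix_append _ _
    · have e1 : (f.2 ++ μ).map rl ++ [cSym c] = f.2.map rl ++ (μ.map rl ++ [cSym c]) := by
        simp [List.map_append, List.append_assoc]
      have e2 : ((f.2 ++ μ).map rl ++ [cSym c]).drop ((f.2.map rl, f.2.map rl) : SOp).2.length
          = μ.map rl ++ [cSym c] := by
        rw [e1]; exact List.drop_left
      have e3 : ((f.2.map rl, f.2.map rl) : SOp).2.drop ((f.2 ++ μ).map rl ++ [cSym c]).length
          = [] := by
        apply List.drop_eq_nil_of_le
        simp only [List.length_append, List.length_map, List.length_singleton]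
        omega
      rw [e2, e3]
      simp [List.map_append, List.append_assoc]

/-- success: a unary query `(D, P, G)` succeeds iff the flow
`ACCEPT(x) ⊣ START(x)` belongs to `⟦G⟧ Pⁿ ⟦D⟧` for some `n`. -/
theorem query_success (D : Finset CT) (P : SWiring) (G : CT) :
    Succeeds D P G ↔
      ∃ n, ([ACCEPT], [START]) ∈ smul (smul {encG G} (spow (encP P) n)) (encD D) := by
  constructor
  · intro hs
    obtain ⟨n, hn⟩ := derive_mem hs
    refine ⟨n, ?_⟩
    rw [smul_assoc', mem_smul_s17]
    refine ⟨encG G, Finset.mem_singleton_self _, _, hn, ?_⟩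
    rw [scomp_eq_some_iff]
    refine ⟨Or.inl (by rw [encG]), ?_⟩
    rw [encG]
    simp [List.drop_length]
  · rintro ⟨n, hm⟩
    rw [smul_assoc', mem_smul_s17] at hm
    obtain ⟨g', hg', q, hq, hc⟩ := hm
    rw [Finset.mem_singleton] at hg'
    subst hg'
    obtain ⟨μ, c, rfl, hder⟩ := mem_smul_spow_encD hq
    rw [scomp_eq_some_iff] at hc
    obtain ⟨hcomp, heq⟩ := hc
    rw [encG] at hcomp heq
    simp only [Prod.mk.injEq] at heq
    obtain ⟨h1, h2⟩ := heq
    have hx : (μ.map rl ++ [cSym c]).drop (G.1.map rl ++ [cSym G.2]).length = [] := by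
      have h1' := h1.symm
      rwa [List.append_right_eq_self] at h1'
    have hy : (G.1.map rl ++ [cSym G.2]).drop (μ.map rl ++ [cSym c]).length = [] := by
      have h2' := h2.symm
      rwa [List.append_right_eq_self] at h2'
    rw [List.drop_eq_nil_iff] at hx hy
    have hqeq : μ.map rl ++ [cSym c] = G.1.map rl ++ [cSym G.2] := by
      simp only at hcomp
      rcases hcomp with hp | hp
      · exact (hp.eq_of_length_le hx).symm
      · exact hp.eq_of_length_le hy
    obtain ⟨rfl, rfl⟩ := enc_inj hqeq
    exact hder
end
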